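/- arXiv:1605.00073 — 7 statements merged into one kernel-verified Lean document; each statement's English description precedes it below -/
import Mathlib

section
/- The map ι from colored pure free braid diagrams on n strands to G_n^2, sending a diagram with crossings c_1,...,c_m (ordered by height, the k-th crossing involving strands i_k and j_k) to the word a_{i_1 j_1} ··· a_{i_m j_m}, is invariant under the three Artin moves for free braids (second Reidemeister move, third Reidemeister move, and far commutativity), hence well-defined on equivalence classes of free braids. -/
abbrev GenG (n : ℕ) := {p : Fin n × Fin n // p.1 < p.2}

def relsG (n : ℕ) : Set (FreeGroup (GenG n)) :=
  {r | (∃ a : GenG n, r = .of a * .of a) ∨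
    (∃ a b : GenG n, ({a.1.1, a.1.2, b.1.1, b.1.2} : Finset (Fin n)).card = 4 ∧
      r = .of a * .of b * (.of b * .of a)⁻¹) ∨
    (∃ i j k : Fin n, ∃ hij : i < j, ∃ hik : i < k, ∃ hjk : j < k,
      r = .of ⟨(i,j),hij⟩ * .of ⟨(i,k),hik⟩ * .of ⟨(j,k),hjk⟩ *
          (.of ⟨(j,k),hjk⟩ * .of ⟨(i,k),hik⟩ * .of ⟨(i,j),hij⟩)⁻¹)}

abbrev G2 (n : ℕ) := PresentedGroup (relsG n)

inductive ArtinMove (n : ℕ) : List (GenG n) → List (GenG n) → Prop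
  | r2 (l l' : List (GenG n)) (a : GenG n) : ArtinMove n (l ++ [a, a] ++ l') (l ++ l')
  | far (l l' : List (GenG n)) (a b : GenG n)
      (h : ({a.1.1, a.1.2, b.1.1, b.1.2} : Finset (Fin n)).card = 4) :
      ArtinMove n (l ++ [a, b] ++ l') (l ++ [b, a] ++ l')
  | r3 (l l' : List (GenG n)) (i j k : Fin n) (hij : i < j) (hik : i < k) (hjk : j < k) :
      ArtinMove n (l ++ [⟨(i,j),hij⟩, ⟨(i,k),hik⟩, ⟨(j,k),hjk⟩] ++ l')
                  (l ++ [⟨(j,k),hjk⟩, ⟨(i,k),hik⟩, ⟨(i,j),hij⟩] ++ l')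

def iota (n : ℕ) (w : List (GenG n)) : G2 n := (w.map PresentedGroup.of).prod

lemma rel_one (n : ℕ) {r : FreeGroup (GenG n)} (hr : r ∈ relsG n) :
    (QuotientGroup.mk r : G2 n) = 1 := by
  rw [QuotientGroup.eq_one_iff]
  exact Subgroup.subset_normalClosure hr

lemma gen_of_eq (n : ℕ) (a : GenG n) :
    (PresentedGroup.of a : G2 n) = QuotientGroup.mk (FreeGroup.of a) := rfl

lemma mul_self_one (n : ℕ) (a : GenG n) :
    (PresentedGroup.of a : G2 n) * PresentedGroup.of a = 1 := by
  have := rel_one n (r := FreeGroup.of a * FreeGroup.of a) (Or.inl ⟨a, rfl⟩)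
  exact this

lemma far_comm (n : ℕ) (a b : GenG n)
    (h : ({a.1.1, a.1.2, b.1.1, b.1.2} : Finset (Fin n)).card = 4) :
    (PresentedGroup.of a : G2 n) * PresentedGroup.of b =
      PresentedGroup.of b * PresentedGroup.of a := by
  have := rel_one n (r := FreeGroup.of a * FreeGroup.of b *
    (FreeGroup.of b * FreeGroup.of a)⁻¹) (Or.inr (Or.inl ⟨a, b, h, rfl⟩))
  have h2 : (PresentedGroup.of a : G2 n) * PresentedGroup.of b *
      (PresentedGroup.of b * PresentedGroup.of a)⁻¹ = 1 := by
    exact this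
  exact mul_inv_eq_one.mp h2

lemma triple_rel (n : ℕ) (i j k : Fin n) (hij : i < j) (hik : i < k) (hjk : j < k) :
    (PresentedGroup.of ⟨(i,j),hij⟩ : G2 n) * PresentedGroup.of ⟨(i,k),hik⟩ *
      PresentedGroup.of ⟨(j,k),hjk⟩ =
    PresentedGroup.of ⟨(j,k),hjk⟩ * PresentedGroup.of ⟨(i,k),hik⟩ *
      PresentedGroup.of ⟨(i,j),hij⟩ := by
  have := rel_one n (r := FreeGroup.of ⟨(i,j),hij⟩ * FreeGroup.of ⟨(i,k),hik⟩ *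
      FreeGroup.of ⟨(j,k),hjk⟩ *
      (FreeGroup.of ⟨(j,k),hjk⟩ * FreeGroup.of ⟨(i,k),hik⟩ * FreeGroup.of ⟨(i,j),hij⟩)⁻¹)
    (Or.inr (Or.inr ⟨i, j, k, hij, hik, hjk, rfl⟩))
  have h2 : (PresentedGroup.of ⟨(i,j),hij⟩ : G2 n) * PresentedGroup.of ⟨(i,k),hik⟩ *
      PresentedGroup.of ⟨(j,k),hjk⟩ *
      ((PresentedGroup.of ⟨(j,k),hjk⟩ : G2 n) * PresentedGroup.of ⟨(i,k),hik⟩ *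
        PresentedGroup.of ⟨(i,j),hij⟩)⁻¹ = 1 := by
    exact this
  exact mul_inv_eq_one.mp h2

lemma iota_append (n : ℕ) (w w' : List (GenG n)) :
    iota n (w ++ w') = iota n w * iota n w' := by
  simp [iota]

theorem iota_invariant (n : ℕ) (w w' : List (GenG n)) (h : ArtinMove n w w') :
    iota n w = iota n w' := by
  induction h with
  | r2 l l' a =>
      simp only [iota_append]
      congr 1
      rw [show iota n [a, a] = PresentedGroup.of a * PresentedGroup.of a by
        simp [iota], mul_self_one]
      simp [iota]
  | far l l' a b hcard =>
      simp only [iota_append]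
      congr 2
      simpa [iota] using far_comm n a b hcard
  | r3 l l' i j k hij hik hjk =>
      simp only [iota_append]
      congr 2
      simpa [iota, mul_assoc] using triple_rel n i j k hij hik hjk
end

section
/- If two elements β and β' of G_n^2 become equal in G_{n,p}^2 under the map sending a_{ij} to a_{ij}^0, then β = β' in G_n^2. -/
abbrev GenP (n : ℕ) := GenG n × Bool

def relsP (n : ℕ) : Set (FreeGroup (GenP n)) :=
  {r | (∃ a : GenP n, r = .of a * .of a) ∨
    (∃ a b : GenG n, ∃ e₁ e₂ : Bool, ({a.1.1, a.1.2, b.1.1, b.1.2} : Finset (Fin n)).card = 4 ∧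
      r = .of (a,e₁) * .of (b,e₂) * (.of (b,e₂) * .of (a,e₁))⁻¹) ∨
    (∃ i j k : Fin n, ∃ hij : i < j, ∃ hik : i < k, ∃ hjk : j < k, ∃ e₁ e₂ e₃ : Bool,
      Bool.xor e₁ (Bool.xor e₂ e₃) = false ∧
      r = .of (⟨(i,j),hij⟩,e₁) * .of (⟨(i,k),hik⟩,e₂) * .of (⟨(j,k),hjk⟩,e₃) *
          (.of (⟨(j,k),hjk⟩,e₃) * .of (⟨(i,k),hik⟩,e₂) * .of (⟨(i,j),hij⟩,e₁))⁻¹)}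

abbrev G2p (n : ℕ) := PresentedGroup (relsP n)

lemma relG_one {n : ℕ} {r : FreeGroup (GenG n)} (hr : r ∈ relsG n) :
    (QuotientGroup.mk r : G2 n) = 1 := by
  rw [QuotientGroup.eq_one_iff]
  exact Subgroup.subset_normalClosure hr

lemma lift_eq_mk {n : ℕ} (r : FreeGroup (GenP n)) :
    FreeGroup.lift (fun p : GenP n => PresentedGroup.of (rels := relsG n) p.1) r
      = (QuotientGroup.mk (FreeGroup.map Prod.fst r) : G2 n) := by
  have : FreeGroup.lift (fun p : GenP n => PresentedGroup.of (rels := relsG n) p.1)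
      = (QuotientGroup.mk' (Subgroup.normalClosure (relsG n))).comp (FreeGroup.map Prod.fst) := by
    apply FreeGroup.ext_hom
    intro x
    simp [PresentedGroup.of]
    rfl
  rw [this]; rfl

lemma retraction_rel {n : ℕ} : ∀ r ∈ relsP n,
    FreeGroup.lift (fun p : GenP n => PresentedGroup.of (rels := relsG n) p.1) r = 1 := by
  intro r hr
  rw [lift_eq_mk]
  apply relG_one
  rcases hr with ⟨a, rfl⟩ | ⟨a, b, e₁, e₂, hc, rfl⟩ | ⟨i, j, k, hij, hik, hjk, e₁, e₂, e₃, _, rfl⟩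
  · exact Or.inl ⟨a.1, by simp⟩
  · exact Or.inr (Or.inl ⟨a, b, hc, by simp⟩)
  · exact Or.inr (Or.inr ⟨i, j, k, hij, hik, hjk, by simp⟩)

theorem eq_in_parity_implies_eq (n : ℕ) (f : G2 n →* G2p n)
    (hf : ∀ a : GenG n, f (PresentedGroup.of a) = PresentedGroup.of (a, false))
    (β β' : G2 n) (h : f β = f β') : β = β' := by
  let g : G2p n →* G2 n := PresentedGroup.toGroup retraction_rel
  have hcomp : g.comp f = MonoidHom.id (G2 n) := by
    apply PresentedGroup.ext
    intro x
    simp [g, hf x, PresentedGroup.toGroup.of]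
  have := congrArg g h
  calc β = (g.comp f) β := by rw [hcomp]; rfl
    _ = (g.comp f) β' := this
    _ = β' := by rw [hcomp]; rfl
end

section
/- The map φ : G_{n,p}^2 → G_{n,d}^2 defined on generators by φ(a_{ij}^0) = a_{ij} and φ(a_{ij}^1) = τ_i a_{ij} τ_i is a well-defined group homomorphism. -/
abbrev GenD (n : ℕ) := GenG n ⊕ Fin n

def relsD (n : ℕ) : Set (FreeGroup (GenD n)) :=
  {r | (∃ a : GenG n, r = .of (.inl a) * .of (.inl a)) ∨
    (∃ a b : GenG n, ({a.1.1, a.1.2, b.1.1, b.1.2} : Finset (Fin n)).card = 4 ∧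
      r = .of (.inl a) * .of (.inl b) * (.of (.inl b) * .of (.inl a))⁻¹) ∨
    (∃ i j k : Fin n, ∃ hij : i < j, ∃ hik : i < k, ∃ hjk : j < k,
      r = .of (.inl ⟨(i,j),hij⟩) * .of (.inl ⟨(i,k),hik⟩) * .of (.inl ⟨(j,k),hjk⟩) *
          (.of (.inl ⟨(j,k),hjk⟩) * .of (.inl ⟨(i,k),hik⟩) * .of (.inl ⟨(i,j),hij⟩))⁻¹) ∨
    (∃ i : Fin n, r = .of (.inr i) * .of (.inr i)) ∨
    (∃ i j : Fin n, i ≠ j ∧ r = .of (.inr i) * .of (.inr j) * (.of (.inr j) * .of (.inr i))⁻¹) ∨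
    (∃ i j : Fin n, ∃ h : i < j,
      r = .of (.inr i) * .of (.inr j) * .of (.inl ⟨(i,j),h⟩) * .of (.inr j) * .of (.inr i) *
          (.of (.inl ⟨(i,j),h⟩))⁻¹) ∨
    (∃ a : GenG n, ∃ k : Fin n, k ≠ a.1.1 ∧ k ≠ a.1.2 ∧
      r = .of (.inl a) * .of (.inr k) * (.of (.inr k) * .of (.inl a))⁻¹)}

abbrev G2d (n : ℕ) := PresentedGroup (relsD n)


namespace PhiAux

variable {n : ℕ}

def A (a : GenG n) : G2d n := PresentedGroup.of (Sum.inl a)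
def T (i : Fin n) : G2d n := PresentedGroup.of (Sum.inr i)

lemma rel_one {r : FreeGroup (GenD n)} (hr : r ∈ relsD n) :
    PresentedGroup.mk (relsD n) r = 1 :=
  (QuotientGroup.eq_one_iff r).mpr (Subgroup.subset_normalClosure hr)

lemma AA_self (a : GenG n) : A a * A a = 1 := by
  have := rel_one (n := n) (r := .of (.inl a) * .of (.inl a)) (Or.inl ⟨a, rfl⟩)
  simpa only [A, PresentedGroup.of, map_mul] using this

lemma TT_self (i : Fin n) : T i * T i = 1 := by
  have := rel_one (n := n) (r := .of (.inr i) * .of (.inr i))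
    (Or.inr (Or.inr (Or.inr (Or.inl ⟨i, rfl⟩))))
  simpa only [T, PresentedGroup.of, map_mul] using this

lemma AA_comm (a b : GenG n)
    (h : ({a.1.1, a.1.2, b.1.1, b.1.2} : Finset (Fin n)).card = 4) :
    A a * A b = A b * A a := by
  have := rel_one (n := n)
    (r := .of (.inl a) * .of (.inl b) * (.of (.inl b) * .of (.inl a))⁻¹)
    (Or.inr (Or.inl ⟨a, b, h, rfl⟩))
  simpa only [A, PresentedGroup.of, map_mul, map_inv, mul_inv_eq_one] using this

lemma triple (i j k : Fin n) (hij : i < j) (hik : i < k) (hjk : j < k) :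
    A ⟨(i,j),hij⟩ * A ⟨(i,k),hik⟩ * A ⟨(j,k),hjk⟩ =
      A ⟨(j,k),hjk⟩ * A ⟨(i,k),hik⟩ * A ⟨(i,j),hij⟩ := by
  have := rel_one (n := n)
    (r := .of (.inl ⟨(i,j),hij⟩) * .of (.inl ⟨(i,k),hik⟩) * .of (.inl ⟨(j,k),hjk⟩) *
          (.of (.inl ⟨(j,k),hjk⟩) * .of (.inl ⟨(i,k),hik⟩) * .of (.inl ⟨(i,j),hij⟩))⁻¹)
    (Or.inr (Or.inr (Or.inl ⟨i, j, k, hij, hik, hjk, rfl⟩)))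
  simpa only [A, PresentedGroup.of, map_mul, map_inv, mul_inv_eq_one] using this

lemma TT_comm (i j : Fin n) (h : i ≠ j) : T i * T j = T j * T i := by
  have := rel_one (n := n)
    (r := .of (.inr i) * .of (.inr j) * (.of (.inr j) * .of (.inr i))⁻¹)
    (Or.inr (Or.inr (Or.inr (Or.inr (Or.inl ⟨i, j, h, rfl⟩)))))
  simpa only [T, PresentedGroup.of, map_mul, map_inv, mul_inv_eq_one] using this

lemma conj_rel (i j : Fin n) (h : i < j) :
    T i * T j * A ⟨(i,j),h⟩ * T j * T i = A ⟨(i,j),h⟩ := by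
  have := rel_one (n := n)
    (r := .of (.inr i) * .of (.inr j) * .of (.inl ⟨(i,j),h⟩) * .of (.inr j) * .of (.inr i) *
          (.of (.inl ⟨(i,j),h⟩))⁻¹)
    (Or.inr (Or.inr (Or.inr (Or.inr (Or.inr (Or.inl ⟨i, j, h, rfl⟩))))))
  simpa only [A, T, PresentedGroup.of, map_mul, map_inv, mul_inv_eq_one] using this

lemma AT_comm (a : GenG n) (k : Fin n) (h1 : k ≠ a.1.1) (h2 : k ≠ a.1.2) :
    A a * T k = T k * A a := by
  have := rel_one (n := n)
    (r := .of (.inl a) * .of (.inr k) * (.of (.inr k) * .of (.inl a))⁻¹)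
    (Or.inr (Or.inr (Or.inr (Or.inr (Or.inr (Or.inr ⟨a, k, h1, h2, rfl⟩))))))
  simpa only [A, T, PresentedGroup.of, map_mul, map_inv, mul_inv_eq_one] using this

lemma TT_cancel (i : Fin n) (x : G2d n) : T i * (T i * x) = x := by
  rw [← mul_assoc, TT_self, one_mul]

lemma AA_cancel (a : GenG n) (x : G2d n) : A a * (A a * x) = x := by
  rw [← mul_assoc, AA_self, one_mul]

/-- `τ_j a_{ij} τ_j = τ_i a_{ij} τ_i`. -/
lemma swap (i j : Fin n) (h : i < j) :
    T j * A ⟨(i,j),h⟩ * T j = T i * A ⟨(i,j),h⟩ * T i := by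
  have h1 := congrArg (fun x => T i * x * T i) (conj_rel i j h)
  simp only [mul_assoc, TT_cancel] at h1
  simp only [← h1, mul_assoc, TT_cancel, TT_self, mul_one]

lemma case011 (k : Fin n) (x y z : G2d n) (hc : x * T k = T k * x)
    (htr : x * y * z = z * y * x) :
    x * (T k * y * T k) * (T k * z * T k) = (T k * z * T k) * (T k * y * T k) * x := by
  have L : x * (T k * y * T k) * (T k * z * T k) = T k * (x * y * z) * T k := by
    rw [show x * (T k * y * T k) * (T k * z * T k) = x * T k * y * (T k * T k) * z * T k by group,
      TT_self, hc, show T k * x * y * 1 * z * T k = T k * (x * y * z) * T k by group]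
  have R : (T k * z * T k) * (T k * y * T k) * x = T k * (z * y * x) * T k := by
    rw [show (T k * z * T k) * (T k * y * T k) * x = T k * z * (T k * T k) * y * (T k * x) by group,
      TT_self, ← hc, show T k * z * 1 * y * (x * T k) = T k * (z * y * x) * T k by group]
  rw [L, R, htr]

lemma case101 (j : Fin n) (x y z : G2d n) (hc : y * T j = T j * y)
    (htr : x * y * z = z * y * x) :
    (T j * x * T j) * y * (T j * z * T j) = (T j * z * T j) * y * (T j * x * T j) := by
  have hy : T j * y * T j = y := by rw [← hc, mul_assoc, TT_self, mul_one]
  have L : (T j * x * T j) * y * (T j * z * T j) = T j * (x * y * z) * T j := by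
    rw [show (T j * x * T j) * y * (T j * z * T j) = T j * x * (T j * y * T j) * z * T j by group,
      hy, show T j * x * y * z * T j = T j * (x * y * z) * T j by group]
  have R : (T j * z * T j) * y * (T j * x * T j) = T j * (z * y * x) * T j := by
    rw [show (T j * z * T j) * y * (T j * x * T j) = T j * z * (T j * y * T j) * x * T j by group,
      hy, show T j * z * y * x * T j = T j * (z * y * x) * T j by group]
  rw [L, R, htr]

lemma case110 (i : Fin n) (x y z : G2d n) (hc : z * T i = T i * z)
    (htr : x * y * z = z * y * x) :
    (T i * x * T i) * (T i * y * T i) * z = z * (T i * y * T i) * (T i * x * T i) := by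
  have L : (T i * x * T i) * (T i * y * T i) * z = T i * (x * y * z) * T i := by
    rw [show (T i * x * T i) * (T i * y * T i) * z = T i * x * (T i * T i) * y * (T i * z) by group,
      TT_self, ← hc, show T i * x * 1 * y * (z * T i) = T i * (x * y * z) * T i by group]
  have R : z * (T i * y * T i) * (T i * x * T i) = T i * (z * y * x) * T i := by
    rw [show z * (T i * y * T i) * (T i * x * T i) = (z * T i) * y * (T i * T i) * x * T i by group,
      TT_self, hc, show T i * z * y * 1 * x * T i = T i * (z * y * x) * T i by group]
  rw [L, R, htr]

lemma card3 {α : Type*} [DecidableEq α] (a b c : α) : ({a, b, c} : Finset α).card ≤ 3 :=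
  (Finset.card_insert_le _ _).trans (Nat.succ_le_succ
    ((Finset.card_insert_le _ _).trans (by simp)))

lemma cross_ne {α : Type*} [DecidableEq α] {i j k l : α}
    (h : ({i, j, k, l} : Finset α).card = 4) : i ≠ k ∧ i ≠ l ∧ j ≠ k ∧ j ≠ l := by
  refine ⟨?_, ?_, ?_, ?_⟩ <;> rintro rfl
  · have hs : ({i, j, i, l} : Finset α) ⊆ {i, j, l} := by
      intro x hx; simp only [Finset.mem_insert, Finset.mem_singleton] at hx ⊢; tauto
    have := (Finset.card_le_card hs).trans (card3 i j l); omega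
  · have hs : ({i, j, k, i} : Finset α) ⊆ {i, j, k} := by
      intro x hx; simp only [Finset.mem_insert, Finset.mem_singleton] at hx ⊢; tauto
    have := (Finset.card_le_card hs).trans (card3 i j k); omega
  · have hs : ({i, j, j, l} : Finset α) ⊆ {i, j, l} := by
      intro x hx; simp only [Finset.mem_insert, Finset.mem_singleton] at hx ⊢; tauto
    have := (Finset.card_le_card hs).trans (card3 i j l); omega
  · have hs : ({i, j, k, j} : Finset α) ⊆ {i, j, k} := by
      intro x hx; simp only [Finset.mem_insert, Finset.mem_singleton] at hx ⊢; tauto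
    have := (Finset.card_le_card hs).trans (card3 i j k); omega

/-- The map on generators. -/
def f : GenP n → G2d n
  | (a, false) => A a
  | (a, true) => T a.1.1 * A a * T a.1.1

lemma f_rels : ∀ r ∈ relsP n, FreeGroup.lift (f (n := n)) r = 1 := by
  rintro r (⟨⟨a, e⟩, rfl⟩ | ⟨a, b, e₁, e₂, hc, rfl⟩ |
    ⟨i, j, k, hij, hik, hjk, e₁, e₂, e₃, hx, rfl⟩)
  · simp only [map_mul, FreeGroup.lift_apply_of]
    cases e <;> simp only [f, mul_assoc, TT_cancel, AA_cancel, TT_self, AA_self]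
  · simp only [map_mul, map_inv, FreeGroup.lift_apply_of, mul_inv_eq_one]
    obtain ⟨h1, h2, h3, h4⟩ := cross_ne hc
    have cAA : Commute (A a) (A b) := AA_comm a b hc
    have cAT : Commute (A a) (T b.1.1) := AT_comm a b.1.1 h1.symm h3.symm
    have cTA : Commute (T a.1.1) (A b) := Commute.symm (AT_comm b a.1.1 h1 h2)
    have cTT : Commute (T a.1.1) (T b.1.1) := TT_comm a.1.1 b.1.1 h1
    cases e₁ <;> cases e₂ <;> simp only [f]
    · exact cAA
    · exact (cAT.mul_right cAA).mul_right cAT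
    · exact (cTA.mul_left cAA).mul_left cTA
    · exact (((cTT.mul_right cTA).mul_right cTT).mul_left
        ((cAT.mul_right cAA).mul_right cAT)).mul_left
        ((cTT.mul_right cTA).mul_right cTT)
  · simp only [map_mul, map_inv, FreeGroup.lift_apply_of, mul_inv_eq_one]
    have htr := triple i j k hij hik hjk
    cases e₁ <;> cases e₂ <;> cases e₃ <;> simp only [f] <;> simp at hx
    · exact htr
    · rw [← swap i k hik, ← swap j k hjk]
      exact case011 k _ _ _ (AT_comm ⟨(i,j),hij⟩ k hik.ne' hjk.ne') htr
    · rw [← swap i j hij]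
      exact case101 j _ _ _ (AT_comm ⟨(i,k),hik⟩ j hij.ne' hjk.ne) htr
    · exact case110 i _ _ _ (AT_comm ⟨(j,k),hjk⟩ i hij.ne hik.ne) htr

end PhiAux

theorem phi_well_defined (n : ℕ) :
    ∃ φ : G2p n →* G2d n, ∀ a : GenG n,
      φ (PresentedGroup.of (a, false)) = PresentedGroup.of (Sum.inl a) ∧
      φ (PresentedGroup.of (a, true)) =
        PresentedGroup.of (Sum.inr a.1.1) * PresentedGroup.of (Sum.inl a) *
          PresentedGroup.of (Sum.inr a.1.1) := by
  refine ⟨PresentedGroup.toGroup PhiAux.f_rels, fun a => ⟨?_, ?_⟩⟩ <;>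
    simp [PresentedGroup.toGroup.of, PhiAux.f, PhiAux.A, PhiAux.T]
end

section
/- The map χ : H_{n,d}^2 → G_{n,p}^2 defined on a word T_0 a_{i_1 j_1} T_1 ⋯ T_{m-1} a_{i_m j_m} T_m (where each T_k is a product of τ's) by χ(β) = a_{i_1 j_1}^{ε_1} ⋯ a_{i_m j_m}^{ε_m}, with ε_k the sum modulo 2 of the numbers of occurrences of τ_{i_k} and τ_{j_k} in T_0,...,T_{k-1}, is well-defined (independent of the chosen word representing β). -/
def NiMap (n : ℕ) (i : Fin n) : GenD n → Multiplicative (ZMod 2) :=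
  Sum.elim (fun _ => 1) (fun k => if k = i then Multiplicative.ofAdd 1 else 1)

theorem relsD_Ni (n : ℕ) (i : Fin n) : ∀ r ∈ relsD n, FreeGroup.lift (NiMap n i) r = 1 := by
  intro r hr
  rcases hr with ⟨a,rfl⟩|⟨a,b,_,rfl⟩|⟨i',j,k,hij,hik,hjk,rfl⟩|⟨a,rfl⟩|⟨a,b,_,rfl⟩|⟨a,b,h,rfl⟩|⟨a,k,_,_,rfl⟩ <;>
    simp only [map_mul, map_inv, FreeGroup.lift_apply_of, NiMap, Sum.elim_inl, Sum.elim_inr] <;>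
    first
      | (split_ifs <;> decide)
      | decide

def Ni (n : ℕ) (i : Fin n) : G2d n →* Multiplicative (ZMod 2) :=
  PresentedGroup.toGroup (relsD_Ni n i)

def Hsub (n : ℕ) : Subgroup (G2d n) := ⨅ i : Fin n, (Ni n i).ker

def wordProd (n : ℕ) (w : List (GenD n)) : G2d n := (w.map PresentedGroup.of).prod

def chiWord {n : ℕ} : List (GenD n) → (Fin n → Bool) → G2p n
  | [], _ => 1
  | Sum.inl a :: t, c => PresentedGroup.of (a, Bool.xor (c a.1.1) (c a.1.2)) * chiWord t c
  | Sum.inr i :: t, c => chiWord t (Function.update c i (!c i))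


section ChiAux

open SemidirectProduct

variable {n : ℕ}

lemma rel_one_s11 {α : Type*} {rels : Set (FreeGroup α)} {r : FreeGroup α} (h : r ∈ rels) :
    (QuotientGroup.mk r : PresentedGroup rels) = 1 :=
  (QuotientGroup.eq_one_iff _).2 (Subgroup.subset_normalClosure h)

lemma ofP_sq (x : GenP n) :
    (PresentedGroup.of x : G2p n) * PresentedGroup.of x = 1 := by
  exact rel_one_s11 (rels := relsP n) (Or.inl ⟨x, rfl⟩)

lemma ofP_comm {a b : GenG n} (e₁ e₂ : Bool)
    (h : ({a.1.1, a.1.2, b.1.1, b.1.2} : Finset (Fin n)).card = 4) :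
    (PresentedGroup.of (a,e₁) : G2p n) * PresentedGroup.of (b,e₂) =
      PresentedGroup.of (b,e₂) * PresentedGroup.of (a,e₁) := by
  have := rel_one_s11 (rels := relsP n) (Or.inr (Or.inl ⟨a, b, e₁, e₂, h, rfl⟩))
  simp only [map_mul, map_inv, QuotientGroup.mk_mul, QuotientGroup.mk_inv] at this
  exact mul_inv_eq_one.mp this

lemma ofP_triple {i j k : Fin n} (hij : i < j) (hik : i < k) (hjk : j < k)
    {e₁ e₂ e₃ : Bool} (he : Bool.xor e₁ (Bool.xor e₂ e₃) = false) :
    (PresentedGroup.of (⟨(i,j),hij⟩,e₁) : G2p n) * PresentedGroup.of (⟨(i,k),hik⟩,e₂) *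
        PresentedGroup.of (⟨(j,k),hjk⟩,e₃) =
      PresentedGroup.of (⟨(j,k),hjk⟩,e₃) * PresentedGroup.of (⟨(i,k),hik⟩,e₂) *
        PresentedGroup.of (⟨(i,j),hij⟩,e₁) := by
  have := rel_one_s11 (rels := relsP n)
    (Or.inr (Or.inr ⟨i, j, k, hij, hik, hjk, e₁, e₂, e₃, he, rfl⟩))
  simp only [map_mul, map_inv, QuotientGroup.mk_mul, QuotientGroup.mk_inv] at this
  exact mul_inv_eq_one.mp this

lemma addself (c s : Fin n → ZMod 2) : c + s + s = c := by
  funext i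
  simp [add_assoc, CharTwo.add_self_eq_zero]

/-- The abelian group of states. -/
abbrev SZ (n : ℕ) := Multiplicative (Fin n → ZMod 2)
/-- Functions from states to `G2p n`. -/
abbrev NN (n : ℕ) := (Fin n → ZMod 2) → G2p n

def phiFun (n : ℕ) : SZ n →* MulAut (NN n) where
  toFun s :=
    { toFun := fun f c => f (c + s.toAdd)
      invFun := fun f c => f (c + s.toAdd)
      left_inv := fun f => funext fun c => by
        show f (c + s.toAdd + s.toAdd) = f c
        rw [addself]
      right_inv := fun f => funext fun c => by
        show f (c + s.toAdd + s.toAdd) = f c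
        rw [addself]
      map_mul' := fun f g => rfl }
  map_one' := by
    ext f c
    show f (c + 0) = f c
    rw [add_zero]
  map_mul' s t := by
    ext f c
    show f (c + (s.toAdd + t.toAdd)) = f (c + s.toAdd + t.toAdd)
    rw [add_assoc]

abbrev KK (n : ℕ) := NN n ⋊[phiFun n] SZ n

def epsZ (a : GenG n) (c : Fin n → ZMod 2) : Bool := decide (c a.1.1 + c a.1.2 = 1)

def gmap (n : ℕ) : GenD n → KK n
  | .inl a => ⟨fun c => PresentedGroup.of (a, epsZ a c), 1⟩
  | .inr i => ⟨1, Multiplicative.ofAdd (Pi.single i 1)⟩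

lemma phiFun_apply (s : SZ n) (f : NN n) (c : Fin n → ZMod 2) :
    phiFun n s f c = f (c + s.toAdd) := rfl

lemma epsZ_single_ne (a : GenG n) {k : Fin n} (h1 : k ≠ a.1.1) (h2 : k ≠ a.1.2)
    (c : Fin n → ZMod 2) : epsZ a (c + Pi.single k 1) = epsZ a c := by
  unfold epsZ
  congr 1
  rw [Pi.add_apply, Pi.add_apply, Pi.single_apply, Pi.single_apply,
    if_neg h1.symm, if_neg h2.symm, add_zero, add_zero]

lemma epsZ_double {i j : Fin n} (h : i < j) (c : Fin n → ZMod 2) :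
    epsZ (⟨(i,j),h⟩ : GenG n) (c + Pi.single i 1 + Pi.single j 1) =
      epsZ (⟨(i,j),h⟩ : GenG n) c := by
  unfold epsZ
  congr 1
  have hne : i ≠ j := h.ne
  simp only [Pi.add_apply, Pi.single_eq_same, Pi.single_eq_of_ne hne, Pi.single_eq_of_ne hne.symm]
  generalize c i = x
  generalize c j = y
  revert x y
  decide

lemma epsZ_xor {i j k : Fin n} (hij : i < j) (hik : i < k) (hjk : j < k)
    (c : Fin n → ZMod 2) :
    Bool.xor (epsZ (⟨(i,j),hij⟩ : GenG n) c)
      (Bool.xor (epsZ (⟨(i,k),hik⟩ : GenG n) c) (epsZ (⟨(j,k),hjk⟩ : GenG n) c)) = false := by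
  unfold epsZ
  have : ∀ x y z : ZMod 2,
      Bool.xor (decide (x + y = 1)) (Bool.xor (decide (x + z = 1)) (decide (y + z = 1))) =
        false := by decide
  exact this (c i) (c j) (c k)

lemma tausq (i : Fin n) :
    (Multiplicative.ofAdd (Pi.single i 1 : Fin n → ZMod 2)) *
      Multiplicative.ofAdd (Pi.single i 1) = 1 := by
  rw [← ofAdd_add, ← Pi.single_add, (by decide : (1:ZMod 2)+1 = 0), Pi.single_zero, ofAdd_zero]

lemma add4 (c x y : Fin n → ZMod 2) : c + (x + y + y + x) = c := by
  funext i
  simp only [Pi.add_apply]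
  have : ∀ a b d : ZMod 2, a + (b + d + d + b) = a := by decide
  exact this _ _ _

lemma relsD_gmap (n : ℕ) : ∀ r ∈ relsD n, FreeGroup.lift (gmap n) r = 1 := by
  intro r hr
  have SIMP : True := trivial
  rcases hr with ⟨a,rfl⟩|⟨a,b,hc,rfl⟩|⟨i,j,k,hij,hik,hjk,rfl⟩|⟨i,rfl⟩|⟨i,j,hne,rfl⟩|
      ⟨i,j,h,rfl⟩|⟨a,k,hk1,hk2,rfl⟩ <;>
    simp only [map_mul, map_inv, FreeGroup.lift_apply_of] <;>
    refine SemidirectProduct.ext (funext fun c => ?_) ?_ <;>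
    try simp only [mul_left, mul_right, inv_left, inv_right, gmap, one_left, one_right,
        map_one, MulAut.one_apply, map_inv, phiFun_apply, Pi.mul_apply, Pi.inv_apply,
        Pi.one_apply, mul_one, one_mul, inv_one, toAdd_one, add_zero, toAdd_ofAdd,
        toAdd_inv, toAdd_mul, ofAdd_add, neg_add_rev, mul_inv_rev, inv_inv]
  case inl.refine_1 =>
    exact ofP_sq _
  case inr.inl.refine_1 =>
    rw [ofP_comm _ _ hc]
    group
  case inr.inr.inl.refine_1 =>
    rw [ofP_triple hij hik hjk (epsZ_xor hij hik hjk c)]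
    group
  case inr.inr.inr.inl.refine_2 =>
    exact tausq i
  case inr.inr.inr.inr.inl.refine_2 =>
    rw [mul_comm (Multiplicative.ofAdd (Pi.single i 1)) (Multiplicative.ofAdd (Pi.single j 1))]
    group
  case inr.inr.inr.inr.inr.inl.refine_1 =>
    rw [add4, ← add_assoc, epsZ_double h c]
    simp
  case inr.inr.inr.inr.inr.inl.refine_2 =>
    rw [mul_assoc (Multiplicative.ofAdd (Pi.single i 1)), tausq, mul_one, tausq]
  case inr.inr.inr.inr.inr.inr.refine_1 =>
    rw [epsZ_single_ne a hk1 hk2]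
    simp
  case inr.inr.inr.inr.inr.inr.refine_2 =>
    simp

def PhiD (n : ℕ) : G2d n →* KK n := PresentedGroup.toGroup (relsD_gmap n)

def toZc {n : ℕ} (c : Fin n → Bool) : Fin n → ZMod 2 := fun i => if c i then 1 else 0

lemma toZc_update (c : Fin n → Bool) (i : Fin n) :
    toZc (Function.update c i (!c i)) = toZc c + Pi.single i 1 := by
  funext j
  by_cases hji : j = i
  · subst hji
    simp only [toZc, Function.update_self, Pi.add_apply, Pi.single_eq_same]
    cases c j <;> decide
  · simp only [toZc, Function.update_of_ne hji, Pi.add_apply, Pi.single_eq_of_ne hji, add_zero]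

lemma epsZ_toZc (a : GenG n) (c : Fin n → Bool) :
    epsZ a (toZc c) = Bool.xor (c a.1.1) (c a.1.2) := by
  unfold epsZ toZc
  cases c a.1.1 <;> cases c a.1.2 <;> decide

lemma key (n : ℕ) (w : List (GenD n)) (c : Fin n → Bool) :
    (PhiD n (wordProd n w)).left (toZc c) = chiWord w c := by
  induction w generalizing c with
  | nil =>
    show (PhiD n 1).left (toZc c) = 1
    rw [map_one]
    rfl
  | cons x t ih =>
    have hw : wordProd n (x :: t) = PresentedGroup.of x * wordProd n t := by
      simp [wordProd]
    rw [hw, map_mul]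
    have ho : PhiD n (PresentedGroup.of x) = gmap n x := PresentedGroup.toGroup.of _
    rw [ho]
    cases x with
    | inl a =>
      show (gmap n (.inl a)).left (toZc c) *
          (phiFun n (gmap n (.inl a)).right (PhiD n (wordProd n t)).left) (toZc c) = _
      simp only [gmap, map_one, MulAut.one_apply]
      rw [epsZ_toZc, ih]
      rfl
    | inr i =>
      show (gmap n (.inr i)).left (toZc c) *
          (phiFun n (gmap n (.inr i)).right (PhiD n (wordProd n t)).left) (toZc c) = _
      simp only [gmap, Pi.one_apply, one_mul, phiFun_apply, toAdd_ofAdd]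
      rw [← toZc_update, ih]
      rfl

end ChiAux

theorem chi_well_defined (n : ℕ) :
    ∃ χ : Hsub n → G2p n, ∀ (w : List (GenD n)) (h : wordProd n w ∈ Hsub n),
      χ ⟨wordProd n w, h⟩ = chiWord w (fun _ => false) := by
  refine ⟨fun b => (PhiD n b.1).left (toZc (fun _ => false)), fun w h => ?_⟩
  exact key n w (fun _ => false)
end

section
/- The homomorphism φ : G_{n,p}^2 → G_{n,d}^2 (φ(a_{ij}^0) = a_{ij}, φ(a_{ij}^1) = τ_i a_{ij} τ_i) is an isomorphism onto the subgroup H_{n,d}^2, with inverse χ; in particular G_{n,p}^2 ≅ H_{n,d}^2. -/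
namespace PhiIso
open PresentedGroup SemidirectProduct

variable {n : ℕ}

/-- image of a relator is 1 -/
lemma mkrel {α : Type*} {rels : Set (FreeGroup α)} {r : FreeGroup α} (hr : r ∈ rels) :
    PresentedGroup.mk rels r = 1 :=
  (QuotientGroup.eq_one_iff r).mpr (Subgroup.subset_normalClosure hr)

abbrev τ (i : Fin n) : G2d n := PresentedGroup.of (Sum.inr i)
abbrev gA (a : GenG n) : G2d n := PresentedGroup.of (Sum.inl a)

lemma P_sq (a : GenP n) : (PresentedGroup.of a : G2p n) * PresentedGroup.of a = 1 := by
  have := mkrel (show (FreeGroup.of a * FreeGroup.of a) ∈ relsP n from Or.inl ⟨a, rfl⟩)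
  rwa [map_mul] at this

lemma P_comm (a b : GenG n) (e₁ e₂ : Bool)
    (h : ({a.1.1, a.1.2, b.1.1, b.1.2} : Finset (Fin n)).card = 4) :
    (PresentedGroup.of (a, e₁) : G2p n) * PresentedGroup.of (b, e₂) =
      PresentedGroup.of (b, e₂) * PresentedGroup.of (a, e₁) := by
  have := mkrel (show _ ∈ relsP n from Or.inr (Or.inl ⟨a, b, e₁, e₂, h, rfl⟩))
  rw [map_mul, map_inv, map_mul, map_mul] at this
  exact mul_inv_eq_one.mp this

lemma P_tri (i j k : Fin n) (hij : i < j) (hik : i < k) (hjk : j < k) (e₁ e₂ e₃ : Bool)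
    (h : Bool.xor e₁ (Bool.xor e₂ e₃) = false) :
    (PresentedGroup.of (⟨(i,j),hij⟩, e₁) : G2p n) * PresentedGroup.of (⟨(i,k),hik⟩, e₂) *
        PresentedGroup.of (⟨(j,k),hjk⟩, e₃) =
      PresentedGroup.of (⟨(j,k),hjk⟩, e₃) * PresentedGroup.of (⟨(i,k),hik⟩, e₂) *
        PresentedGroup.of (⟨(i,j),hij⟩, e₁) := by
  have := mkrel (show _ ∈ relsP n from Or.inr (Or.inr ⟨i, j, k, hij, hik, hjk, e₁, e₂, e₃, h, rfl⟩))
  rw [map_mul, map_inv, map_mul, map_mul, map_mul, map_mul] at this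
  exact mul_inv_eq_one.mp this

lemma D_sq (a : GenG n) : gA a * gA a = 1 := by
  have := mkrel (show _ ∈ relsD n from Or.inl ⟨a, rfl⟩)
  rwa [map_mul] at this

lemma D_comm (a b : GenG n)
    (h : ({a.1.1, a.1.2, b.1.1, b.1.2} : Finset (Fin n)).card = 4) :
    Commute (gA a) (gA b) := by
  have := mkrel (show _ ∈ relsD n from Or.inr (Or.inl ⟨a, b, h, rfl⟩))
  rw [map_mul, map_inv, map_mul, map_mul] at this
  exact mul_inv_eq_one.mp this

lemma D_tri (i j k : Fin n) (hij : i < j) (hik : i < k) (hjk : j < k) :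
    gA ⟨(i,j),hij⟩ * gA ⟨(i,k),hik⟩ * gA ⟨(j,k),hjk⟩ =
      gA ⟨(j,k),hjk⟩ * gA ⟨(i,k),hik⟩ * gA ⟨(i,j),hij⟩ := by
  have := mkrel (show _ ∈ relsD n from Or.inr (Or.inr (Or.inl ⟨i, j, k, hij, hik, hjk, rfl⟩)))
  rw [map_mul, map_inv, map_mul, map_mul, map_mul, map_mul] at this
  exact mul_inv_eq_one.mp this

lemma D_tsq (i : Fin n) : τ i * τ i = 1 := by
  have := mkrel (show _ ∈ relsD n from Or.inr (Or.inr (Or.inr (Or.inl ⟨i, rfl⟩))))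
  rwa [map_mul] at this

lemma tau_inv (i : Fin n) : (τ i)⁻¹ = τ i := inv_eq_of_mul_eq_one_left (D_tsq i)

lemma D_tcomm {i j : Fin n} (h : i ≠ j) : Commute (τ i) (τ j) := by
  have := mkrel (show _ ∈ relsD n from Or.inr (Or.inr (Or.inr (Or.inr (Or.inl ⟨i, j, h, rfl⟩)))))
  rw [map_mul, map_inv, map_mul, map_mul] at this
  exact mul_inv_eq_one.mp this

lemma D_conj {i j : Fin n} (h : i < j) :
    τ i * τ j * gA ⟨(i,j),h⟩ * τ j * τ i = gA ⟨(i,j),h⟩ := by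
  have := mkrel (show _ ∈ relsD n from
    Or.inr (Or.inr (Or.inr (Or.inr (Or.inr (Or.inl ⟨i, j, h, rfl⟩))))))
  rw [map_mul, map_inv, map_mul, map_mul, map_mul, map_mul] at this
  exact mul_inv_eq_one.mp this

lemma D_acomm (a : GenG n) {k : Fin n} (h1 : k ≠ a.1.1) (h2 : k ≠ a.1.2) :
    Commute (gA a) (τ k) := by
  have := mkrel (show _ ∈ relsD n from
    Or.inr (Or.inr (Or.inr (Or.inr (Or.inr (Or.inr ⟨a, k, h1, h2, rfl⟩))))))
  rw [map_mul, map_inv, map_mul, map_mul] at this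
  exact mul_inv_eq_one.mp this

/-- `τ_j a_{ij} τ_j = τ_i a_{ij} τ_i` -/
lemma D_swap {i j : Fin n} (h : i < j) :
    τ j * gA ⟨(i,j),h⟩ * τ j = τ i * gA ⟨(i,j),h⟩ * τ i := by
  have hc := D_conj h
  calc τ j * gA ⟨(i,j),h⟩ * τ j
      = (τ i * τ i) * (τ j * gA ⟨(i,j),h⟩ * τ j) * (τ i * τ i) := by
        rw [D_tsq, one_mul, mul_one]
    _ = τ i * (τ i * τ j * gA ⟨(i,j),h⟩ * τ j * τ i) * τ i := by group
    _ = τ i * gA ⟨(i,j),h⟩ * τ i := by rw [hc]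

lemma card3_le (x y z : Fin n) : ({x, y, z} : Finset (Fin n)).card ≤ 3 :=
  (Finset.card_insert_le _ _).trans (Nat.succ_le_succ
    ((Finset.card_insert_le _ _).trans (by simp)))

lemma four_ne {i j k l : Fin n} (h : ({i, j, k, l} : Finset (Fin n)).card = 4) :
    i ≠ j ∧ i ≠ k ∧ i ≠ l ∧ j ≠ k ∧ j ≠ l ∧ k ≠ l := by
  refine ⟨?_, ?_, ?_, ?_, ?_, ?_⟩ <;> rintro rfl
  · refine absurd h (Nat.ne_of_lt (Nat.lt_succ_of_le (le_trans (Finset.card_le_card ?_) (card3_le i k l))))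
    intro t ht
    simp only [Finset.mem_insert, Finset.mem_singleton] at ht ⊢
    tauto
  · refine absurd h (Nat.ne_of_lt (Nat.lt_succ_of_le (le_trans (Finset.card_le_card ?_) (card3_le i j l))))
    intro t ht
    simp only [Finset.mem_insert, Finset.mem_singleton] at ht ⊢
    tauto
  · refine absurd h (Nat.ne_of_lt (Nat.lt_succ_of_le (le_trans (Finset.card_le_card ?_) (card3_le i j k))))
    intro t ht
    simp only [Finset.mem_insert, Finset.mem_singleton] at ht ⊢
    tauto
  · refine absurd h (Nat.ne_of_lt (Nat.lt_succ_of_le (le_trans (Finset.card_le_card ?_) (card3_le i j l))))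
    intro t ht
    simp only [Finset.mem_insert, Finset.mem_singleton] at ht ⊢
    tauto
  · refine absurd h (Nat.ne_of_lt (Nat.lt_succ_of_le (le_trans (Finset.card_le_card ?_) (card3_le i j k))))
    intro t ht
    simp only [Finset.mem_insert, Finset.mem_singleton] at ht ⊢
    tauto
  · refine absurd h (Nat.ne_of_lt (Nat.lt_succ_of_le (le_trans (Finset.card_le_card ?_) (card3_le i j k))))
    intro t ht
    simp only [Finset.mem_insert, Finset.mem_singleton] at ht ⊢
    tauto

/-- the image of the generator `(a, e)` under `φ` -/
def X (a : GenG n) (e : Bool) : G2d n :=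
  if e then τ a.1.1 * gA a * τ a.1.1 else gA a

lemma X_false (a : GenG n) : X a false = gA a := rfl
lemma X_true (a : GenG n) : X a true = τ a.1.1 * gA a * τ a.1.1 := rfl

lemma ne_of_gen (a : GenG n) : a.1.1 ≠ a.1.2 := ne_of_lt a.2

lemma gen_eta (a : GenG n) : (⟨(a.1.1, a.1.2), a.2⟩ : GenG n) = a := rfl

lemma conj1 (a : GenG n) (e : Bool) :
    τ a.1.1 * X a e * (τ a.1.1)⁻¹ = X a (!e) := by
  rw [tau_inv]
  cases e
  · rfl
  · show τ a.1.1 * (τ a.1.1 * gA a * τ a.1.1) * τ a.1.1 = gA a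
    calc τ a.1.1 * (τ a.1.1 * gA a * τ a.1.1) * τ a.1.1
        = (τ a.1.1 * τ a.1.1) * gA a * (τ a.1.1 * τ a.1.1) := by group
      _ = gA a := by rw [D_tsq, one_mul, mul_one]

lemma conj2 (a : GenG n) (e : Bool) :
    τ a.1.2 * X a e * (τ a.1.2)⁻¹ = X a (!e) := by
  rw [tau_inv]
  have hsw : τ a.1.2 * gA a * τ a.1.2 = τ a.1.1 * gA a * τ a.1.1 := by
    have := D_swap a.2
    rwa [gen_eta] at this
  cases e
  · exact hsw
  · show τ a.1.2 * (τ a.1.1 * gA a * τ a.1.1) * τ a.1.2 = gA a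
    rw [← hsw]
    calc τ a.1.2 * (τ a.1.2 * gA a * τ a.1.2) * τ a.1.2
        = (τ a.1.2 * τ a.1.2) * gA a * (τ a.1.2 * τ a.1.2) := by group
      _ = gA a := by rw [D_tsq, one_mul, mul_one]

lemma commk (a : GenG n) {k : Fin n} (h1 : k ≠ a.1.1) (h2 : k ≠ a.1.2) (e : Bool) :
    Commute (τ k) (X a e) := by
  have hA : Commute (τ k) (gA a) := (D_acomm a h1 h2).symm
  have ht : Commute (τ k) (τ a.1.1) := D_tcomm h1
  cases e
  · exact hA
  · exact (ht.mul_right hA).mul_right ht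

lemma conjk (a : GenG n) {k : Fin n} (h1 : k ≠ a.1.1) (h2 : k ≠ a.1.2) (e : Bool) :
    τ k * X a e * (τ k)⁻¹ = X a e := by
  rw [(commk a h1 h2 e).eq, mul_inv_cancel_right]

lemma X_sq (a : GenG n) (e : Bool) : X a e * X a e = 1 := by
  cases e
  · exact D_sq a
  · show (τ a.1.1 * gA a * τ a.1.1) * (τ a.1.1 * gA a * τ a.1.1) = 1
    have h0 : (τ a.1.1 * gA a * τ a.1.1) * (τ a.1.1 * gA a * τ a.1.1)
        = τ a.1.1 * (gA a * (τ a.1.1 * τ a.1.1) * gA a) * τ a.1.1 := by group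
    rw [h0, D_tsq, mul_one, D_sq, mul_one, D_tsq]

lemma X_comm (a b : GenG n) (e₁ e₂ : Bool)
    (h : ({a.1.1, a.1.2, b.1.1, b.1.2} : Finset (Fin n)).card = 4) :
    Commute (X a e₁) (X b e₂) := by
  obtain ⟨h12, h13, h14, h23, h24, h34⟩ := four_ne h
  have hab : Commute (gA a) (gA b) := D_comm a b h
  have h1 : Commute (gA a) (X b e₂) := by
    cases e₂
    · exact hab
    · exact ((D_acomm a h13.symm h23.symm).mul_right hab).mul_right
        (D_acomm a h13.symm h23.symm)
  have h2 : Commute (τ a.1.1) (X b e₂) := commk b h13 h14 e₂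
  cases e₁
  · exact h1
  · exact (h2.mul_left h1).mul_left h2

lemma conj3 {G : Type*} [Group G] {s A B C A' B' C' : G}
    (hA : A' = s * A * s⁻¹) (hB : B' = s * B * s⁻¹) (hC : C' = s * C * s⁻¹)
    (h : A * B * C = C * B * A) : A' * B' * C' = C' * B' * A' := by
  subst hA hB hC
  calc (s * A * s⁻¹) * (s * B * s⁻¹) * (s * C * s⁻¹)
      = s * (A * B * C) * s⁻¹ := by group
    _ = s * (C * B * A) * s⁻¹ := by rw [h]
    _ = (s * C * s⁻¹) * (s * B * s⁻¹) * (s * A * s⁻¹) := by group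

lemma X_tri (i j k : Fin n) (hij : i < j) (hik : i < k) (hjk : j < k) (e₁ e₂ e₃ : Bool)
    (h : Bool.xor e₁ (Bool.xor e₂ e₃) = false) :
    X ⟨(i,j),hij⟩ e₁ * X ⟨(i,k),hik⟩ e₂ * X ⟨(j,k),hjk⟩ e₃ =
      X ⟨(j,k),hjk⟩ e₃ * X ⟨(i,k),hik⟩ e₂ * X ⟨(i,j),hij⟩ e₁ := by
  have hbase := D_tri i j k hij hik hjk
  have hji : j ≠ i := (ne_of_lt hij).symm
  have hki : k ≠ i := (ne_of_lt hik).symm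
  have hkj : k ≠ j := (ne_of_lt hjk).symm
  have hijne : i ≠ j := ne_of_lt hij
  have hikne : i ≠ k := ne_of_lt hik
  have hjkne : j ≠ k := ne_of_lt hjk
  cases e₁ <;> cases e₂ <;> cases e₃
  · exact hbase
  · exact absurd h (by decide)
  · exact absurd h (by decide)
  · -- (false, true, true) : conjugate by τ k
    exact conj3 (s := τ k)
      ((conjk ⟨(i,j),hij⟩ hki hkj false).symm)
      ((conj2 ⟨(i,k),hik⟩ false).symm)
      ((conj2 ⟨(j,k),hjk⟩ false).symm) hbase
  · exact absurd h (by decide)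
  · -- (true, false, true) : conjugate by τ j
    exact conj3 (s := τ j)
      ((conj2 ⟨(i,j),hij⟩ false).symm)
      ((conjk ⟨(i,k),hik⟩ hji hjkne false).symm)
      ((conj1 ⟨(j,k),hjk⟩ false).symm) hbase
  · -- (true, true, false) : conjugate by τ i
    exact conj3 (s := τ i)
      ((conj1 ⟨(i,j),hij⟩ false).symm)
      ((conj1 ⟨(i,k),hik⟩ false).symm)
      ((conjk ⟨(j,k),hjk⟩ hijne hikne false).symm) hbase
  · exact absurd h (by decide)

lemma relsP_X : ∀ r ∈ relsP n, FreeGroup.lift (fun g : GenP n => X g.1 g.2) r = 1 := by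
  intro r hr
  rcases hr with ⟨a, rfl⟩ | ⟨a, b, e₁, e₂, h, rfl⟩ |
    ⟨i, j, k, hij, hik, hjk, e₁, e₂, e₃, h, rfl⟩ <;>
    simp only [map_mul, map_inv, FreeGroup.lift_apply_of]
  · exact X_sq a.1 a.2
  · exact mul_inv_eq_one.mpr (X_comm a b e₁ e₂ h).eq
  · exact mul_inv_eq_one.mpr (X_tri i j k hij hik hjk e₁ e₂ e₃ h)

/-- the homomorphism `φ : G_{n,p}² → G_{n,d}²` -/
def Φ : G2p n →* G2d n := PresentedGroup.toGroup relsP_X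

lemma Φ_of (g : GenP n) : Φ (PresentedGroup.of g) = X g.1 g.2 := PresentedGroup.toGroup.of _

/-- `Bool` reading of an element of `Multiplicative (ZMod 2)` -/
def bv (x : Multiplicative (ZMod 2)) : Bool := decide (x = Multiplicative.ofAdd 1)

lemma bv_mul (x y : Multiplicative (ZMod 2)) : bv (x * y) = Bool.xor (bv x) (bv y) := by
  revert x y; decide

lemma bv_one : bv (1 : Multiplicative (ZMod 2)) = false := by decide

lemma bv_gen : bv (Multiplicative.ofAdd (1 : ZMod 2)) = true := by decide

lemma mul2_self (x : Multiplicative (ZMod 2)) : x * x = 1 := by revert x; decide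

abbrev Vn (n : ℕ) := Fin n → Multiplicative (ZMod 2)

/-- the generator map for the twisting automorphism -/
def σmap (v : Vn n) : GenP n → G2p n :=
  fun g => PresentedGroup.of (g.1, Bool.xor g.2 (Bool.xor (bv (v g.1.1.1)) (bv (v g.1.1.2))))

lemma relsP_σ (v : Vn n) : ∀ r ∈ relsP n, FreeGroup.lift (σmap v) r = 1 := by
  intro r hr
  rcases hr with ⟨a, rfl⟩ | ⟨a, b, e₁, e₂, h, rfl⟩ |
    ⟨i, j, k, hij, hik, hjk, e₁, e₂, e₃, h, rfl⟩ <;>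
    simp only [map_mul, map_inv, FreeGroup.lift_apply_of, σmap]
  · exact P_sq _
  · exact mul_inv_eq_one.mpr (P_comm a b _ _ h)
  · refine mul_inv_eq_one.mpr (P_tri i j k hij hik hjk _ _ _ ?_)
    cases e₁ <;> cases e₂ <;> cases e₃ <;>
      cases hbi : bv (v i) <;> cases hbj : bv (v j) <;> cases hbk : bv (v k) <;>
      simp_all

/-- the twisting endomorphism of `G_{n,p}²` associated to `v` -/
def A (v : Vn n) : G2p n →* G2p n := PresentedGroup.toGroup (relsP_σ v)

lemma A_of (v : Vn n) (g : GenP n) :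
    A v (PresentedGroup.of g) =
      PresentedGroup.of (g.1, Bool.xor g.2 (Bool.xor (bv (v g.1.1.1)) (bv (v g.1.1.2)))) :=
  PresentedGroup.toGroup.of _

lemma A_A (v w : Vn n) (x : G2p n) : A v (A w x) = A (v * w) x := by
  have h : (A v).comp (A w) = A (v * w) := by
    apply PresentedGroup.ext
    intro g
    simp only [MonoidHom.comp_apply, A_of]
    congr 2
    show Bool.xor (Bool.xor g.2 _) _ = Bool.xor g.2 _
    have h1 : bv ((v * w) g.1.1.1) = Bool.xor (bv (v g.1.1.1)) (bv (w g.1.1.1)) := bv_mul _ _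
    have h2 : bv ((v * w) g.1.1.2) = Bool.xor (bv (v g.1.1.2)) (bv (w g.1.1.2)) := bv_mul _ _
    rw [h1, h2]
    cases g.2 <;> cases bv (v g.1.1.1) <;> cases bv (v g.1.1.2) <;>
      cases bv (w g.1.1.1) <;> cases bv (w g.1.1.2) <;> rfl
  exact DFunLike.congr_fun h x

lemma A_one (x : G2p n) : A 1 x = x := by
  have h : A (n := n) 1 = MonoidHom.id _ := by
    apply PresentedGroup.ext
    intro g
    simp only [MonoidHom.id_apply, A_of]
    have h1 : bv ((1 : Vn n) g.1.1.1) = false := bv_one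
    have h2 : bv ((1 : Vn n) g.1.1.2) = false := bv_one
    simp [h1, h2]
  exact DFunLike.congr_fun h x

/-- the twisting automorphism -/
def Aaut (v : Vn n) : MulAut (G2p n) where
  toFun := A v
  invFun := A v
  left_inv := fun x => by
    rw [A_A]
    have hv : v * v = 1 := funext fun i => mul2_self (v i)
    rw [hv]
    exact A_one x
  right_inv := fun x => by
    rw [A_A]
    have hv : v * v = 1 := funext fun i => mul2_self (v i)
    rw [hv]
    exact A_one x
  map_mul' := map_mul (A v)

lemma Aaut_apply (v : Vn n) (x : G2p n) : Aaut v x = A v x := by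
  simp only [Aaut, MulEquiv.coe_mk, Equiv.coe_fn_mk]

/-- the action of `(ZMod 2)ⁿ` on `G_{n,p}²` -/
def φAut : Vn n →* MulAut (G2p n) where
  toFun := Aaut
  map_one' := MulEquiv.ext fun x => by
    rw [Aaut_apply]
    exact A_one x
  map_mul' := fun v w => MulEquiv.ext fun x => by
    rw [MulAut.mul_apply, Aaut_apply, Aaut_apply, Aaut_apply, A_A]

lemma φAut_apply (v : Vn n) (x : G2p n) : φAut v x = A v x := Aaut_apply v x

abbrev K (n : ℕ) := SemidirectProduct (G2p n) (Vn n) φAut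

/-- the `i`-th standard generator of `Vn n` -/
def ee (i : Fin n) : Vn n := Pi.mulSingle i (Multiplicative.ofAdd 1)

lemma ee_self (i : Fin n) : ee i i = Multiplicative.ofAdd 1 := Pi.mulSingle_eq_same _ _

lemma ee_other {i j : Fin n} (h : j ≠ i) : ee i j = 1 := Pi.mulSingle_eq_of_ne h _

lemma ee_sq (i : Fin n) : ee i * ee i = 1 := funext fun k => mul2_self _

lemma inr_inl_comm {N G : Type*} [Group N] [Group G] {φ : G →* MulAut N} (g : G) (m : N) :
    (SemidirectProduct.inr g : N ⋊[φ] G) * SemidirectProduct.inl m =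
      SemidirectProduct.inl (φ g m) * SemidirectProduct.inr g := by
  rw [SemidirectProduct.inl_aut, map_inv]
  group

/-- the generator map for `Θ : G_{n,d}² → K` -/
def θmap : GenD n → K n :=
  Sum.elim (fun a => SemidirectProduct.inl (PresentedGroup.of (a, false)))
    (fun i => SemidirectProduct.inr (ee i))

lemma A_ee_ee (i j : Fin n) (hij : i ≠ j) (a : GenG n) (hi : a.1.1 = i) (hj : a.1.2 = j) (e : Bool) :
    A (ee i * ee j) (PresentedGroup.of (a, e)) = PresentedGroup.of (a, e) := by
  rw [A_of]
  show PresentedGroup.of (a, _) = _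
  congr 2
  show Bool.xor e (Bool.xor (bv ((ee i * ee j) a.1.1)) (bv ((ee i * ee j) a.1.2))) = e
  have h1 : (ee i * ee j) a.1.1 = Multiplicative.ofAdd 1 := by
    show ee i a.1.1 * ee j a.1.1 = _
    rw [hi, ee_self, ee_other hij, mul_one]
  have h2 : (ee i * ee j) a.1.2 = Multiplicative.ofAdd 1 := by
    show ee i a.1.2 * ee j a.1.2 = _
    rw [hj, ee_other (Ne.symm hij), ee_self, one_mul]
  rw [h1, h2, bv_gen]
  cases e <;> rfl

lemma A_ee_other (k : Fin n) (a : GenG n) (h1 : k ≠ a.1.1) (h2 : k ≠ a.1.2) (e : Bool) :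
    A (ee k) (PresentedGroup.of (a, e)) = PresentedGroup.of (a, e) := by
  rw [A_of]
  show PresentedGroup.of (a, _) = _
  congr 2
  show Bool.xor e (Bool.xor (bv (ee k a.1.1)) (bv (ee k a.1.2))) = e
  rw [ee_other (Ne.symm h1), ee_other (Ne.symm h2), bv_one]
  cases e <;> rfl

lemma A_ee_fst (a : GenG n) (e : Bool) :
    A (ee a.1.1) (PresentedGroup.of (a, e)) = PresentedGroup.of (a, !e) := by
  rw [A_of]
  show PresentedGroup.of (a, _) = _
  congr 2
  show Bool.xor e (Bool.xor (bv (ee a.1.1 a.1.1)) (bv (ee a.1.1 a.1.2))) = !e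
  rw [ee_self, ee_other (Ne.symm (ne_of_gen a)), bv_gen, bv_one]
  cases e <;> rfl

lemma relsD_θ : ∀ r ∈ relsD n, FreeGroup.lift (θmap (n := n)) r = 1 := by
  intro r hr
  rcases hr with ⟨a, rfl⟩ | ⟨a, b, h, rfl⟩ | ⟨i, j, k, hij, hik, hjk, rfl⟩ | ⟨i, rfl⟩ |
    ⟨i, j, h, rfl⟩ | ⟨i, j, h, rfl⟩ | ⟨a, k, h1, h2, rfl⟩ <;>
    simp only [map_mul, map_inv, FreeGroup.lift_apply_of, θmap, Sum.elim_inl, Sum.elim_inr]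
  · rw [← map_mul, P_sq, map_one]
  · rw [mul_inv_eq_one, ← map_mul, ← map_mul, P_comm a b false false h]
  · rw [mul_inv_eq_one, ← map_mul, ← map_mul, ← map_mul, ← map_mul,
      P_tri i j k hij hik hjk false false false rfl]
  · rw [← map_mul, ee_sq, map_one]
  · rw [mul_inv_eq_one, ← map_mul, ← map_mul, mul_comm (ee i) (ee j)]
  · -- τ_i τ_j a_{ij} τ_j τ_i = a_{ij}
    rw [mul_inv_eq_one]
    have hc : SemidirectProduct.inr (φ := φAut) (ee j) *
        SemidirectProduct.inl (PresentedGroup.of (⟨(i,j),h⟩, false)) =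
        SemidirectProduct.inl (φAut (ee j) (PresentedGroup.of (⟨(i,j),h⟩, false))) *
          SemidirectProduct.inr (ee j) := inr_inl_comm _ _
    calc SemidirectProduct.inr (ee i) * SemidirectProduct.inr (ee j) *
          SemidirectProduct.inl (PresentedGroup.of (⟨(i,j),h⟩, false)) *
          SemidirectProduct.inr (ee j) * SemidirectProduct.inr (ee i)
        = SemidirectProduct.inr (ee i) * (SemidirectProduct.inr (ee j) *
            SemidirectProduct.inl (PresentedGroup.of (⟨(i,j),h⟩, false))) *
            SemidirectProduct.inr (ee j) * SemidirectProduct.inr (ee i) := by group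
      _ = SemidirectProduct.inr (ee i) * (SemidirectProduct.inl
            (φAut (ee j) (PresentedGroup.of (⟨(i,j),h⟩, false))) *
            SemidirectProduct.inr (ee j)) * SemidirectProduct.inr (ee j) *
            SemidirectProduct.inr (ee i) := by rw [hc]
      _ = SemidirectProduct.inr (ee i) * SemidirectProduct.inl
            (φAut (ee j) (PresentedGroup.of (⟨(i,j),h⟩, false))) *
            (SemidirectProduct.inr (ee j) * SemidirectProduct.inr (ee j)) *
            SemidirectProduct.inr (ee i) := by group
      _ = SemidirectProduct.inr (ee i) * SemidirectProduct.inl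
            (φAut (ee j) (PresentedGroup.of (⟨(i,j),h⟩, false))) *
            SemidirectProduct.inr (ee i) := by
              rw [← map_mul, ee_sq, map_one, mul_one]
      _ = SemidirectProduct.inl (φAut (ee i) (φAut (ee j)
            (PresentedGroup.of (⟨(i,j),h⟩, false)))) *
            (SemidirectProduct.inr (ee i) * SemidirectProduct.inr (ee i)) := by
              rw [inr_inl_comm]; group
      _ = SemidirectProduct.inl (PresentedGroup.of (⟨(i,j),h⟩, false)) := by
              rw [← map_mul, ee_sq, map_one, mul_one]
              congr 1
              rw [φAut_apply, φAut_apply, A_A]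
              exact A_ee_ee i j (ne_of_lt h) _ rfl rfl false
  · -- a τ_k commute
    rw [mul_inv_eq_one]
    calc SemidirectProduct.inl (φ := φAut) (PresentedGroup.of (a, false)) *
          SemidirectProduct.inr (ee k)
        = SemidirectProduct.inl (φAut (ee k) (PresentedGroup.of (a, false))) *
            SemidirectProduct.inr (ee k) := by
          rw [φAut_apply, A_ee_other k a h1 h2]
      _ = SemidirectProduct.inr (ee k) * SemidirectProduct.inl (PresentedGroup.of (a, false)) := by
          rw [inr_inl_comm]

/-- the homomorphism `Θ : G_{n,d}² → K` -/
def Θ : G2d n →* K n := PresentedGroup.toGroup relsD_θ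

lemma Θ_inl (a : GenG n) :
    Θ (gA a) = SemidirectProduct.inl (PresentedGroup.of (a, false)) :=
  PresentedGroup.toGroup.of _

lemma Θ_inr (i : Fin n) : Θ (τ i) = SemidirectProduct.inr (ee i) :=
  PresentedGroup.toGroup.of _

/-- the homomorphism `Multiplicative (ZMod 2) →* G_{n,d}²` sending the generator to `τ i` -/
def homτ (i : Fin n) : Multiplicative (ZMod 2) →* G2d n where
  toFun x := if bv x then τ i else 1
  map_one' := by
    show (if bv (1 : Multiplicative (ZMod 2)) then τ i else 1) = 1
    rw [bv_one]
    rfl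
  map_mul' x y := by
    show (if bv (x * y) then τ i else 1) =
      (if bv x then τ i else 1) * (if bv y then τ i else 1)
    rw [bv_mul]
    cases hx : bv x <;> cases hy : bv y
    · simp
    · simp
    · simp
    · simpa using (D_tsq i).symm

lemma homτ_apply (i : Fin n) (x : Multiplicative (ZMod 2)) :
    homτ i x = if bv x then τ i else 1 := rfl

lemma hcommτ : Pairwise fun i j : Fin n => ∀ x y, Commute (homτ i x) (homτ j y) := by
  intro i j hij x y
  rw [homτ_apply, homτ_apply]
  split_ifs
  · exact D_tcomm hij
  · exact Commute.one_right _
  · exact Commute.one_left _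
  · exact Commute.one_left _

/-- the homomorphism `f₂ : Vn n →* G_{n,d}²` given by products of `τ`'s -/
def f₂ : Vn n →* G2d n := MonoidHom.noncommPiCoprod homτ hcommτ

lemma f₂_single (i : Fin n) (x : Multiplicative (ZMod 2)) :
    f₂ (Pi.mulSingle i x) = homτ i x :=
  MonoidHom.noncommPiCoprod_mulSingle _ _ _

lemma f₂_ee (i : Fin n) : f₂ (ee i) = τ i := by
  rw [ee, f₂_single, homτ_apply, bv_gen, if_pos rfl]

lemma f₂_noncommProd (v : Vn n) :
    f₂ v = Finset.univ.noncommProd (fun k => homτ k (v k))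
      (fun _ _ _ _ h => hcommτ h _ _) := rfl

lemma conj_f₂ (v : Vn n) (a : GenG n) (e : Bool) :
    f₂ v * X a e * (f₂ v)⁻¹ =
      X a (Bool.xor e (Bool.xor (bv (v a.1.1)) (bv (v a.1.2)))) := by
  have hij : a.1.1 ≠ a.1.2 := ne_of_gen a
  set v' : Vn n := Function.update (Function.update v a.1.1 1) a.1.2 1 with hv'
  have hv'i : v' a.1.1 = 1 := by
    rw [hv', Function.update_of_ne hij, Function.update_self]
  have hv'j : v' a.1.2 = 1 := Function.update_self _ _ _
  have hv'k : ∀ k, k ≠ a.1.1 → k ≠ a.1.2 → v' k = v k := by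
    intro k h1 h2
    rw [hv', Function.update_of_ne h2, Function.update_of_ne h1]
  have hdec : v = Pi.mulSingle a.1.1 (v a.1.1) * Pi.mulSingle a.1.2 (v a.1.2) * v' := by
    funext k
    rw [Pi.mul_apply, Pi.mul_apply]
    by_cases h1 : k = a.1.1
    · subst h1
      rw [Pi.mulSingle_eq_same, Pi.mulSingle_eq_of_ne hij, hv'i, mul_one, mul_one]
    · by_cases h2 : k = a.1.2
      · subst h2
        rw [Pi.mulSingle_eq_same, Pi.mulSingle_eq_of_ne h1, hv'j, one_mul, mul_one]
      · rw [Pi.mulSingle_eq_of_ne h1, Pi.mulSingle_eq_of_ne h2, hv'k k h1 h2, one_mul, one_mul]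
  have hcomm : Commute (f₂ v') (X a e) := by
    rw [f₂_noncommProd]
    apply (Finset.noncommProd_commute _ _ _ _ _).symm
    intro k _
    by_cases h1 : k = a.1.1
    · subst h1; rw [hv'i, map_one]; exact Commute.one_right _
    · by_cases h2 : k = a.1.2
      · subst h2; rw [hv'j, map_one]; exact Commute.one_right _
      · rw [homτ_apply]
        split_ifs
        · exact (commk a h1 h2 e).symm
        · exact Commute.one_right _
  have hsplit : f₂ v = homτ a.1.1 (v a.1.1) * homτ a.1.2 (v a.1.2) * f₂ v' := by
    conv_lhs => rw [hdec]
    rw [map_mul, map_mul, f₂_single, f₂_single]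
  have hmain : f₂ v * X a e * (f₂ v)⁻¹ =
      homτ a.1.1 (v a.1.1) * (homτ a.1.2 (v a.1.2) * (f₂ v' * X a e * (f₂ v')⁻¹) *
        (homτ a.1.2 (v a.1.2))⁻¹) * (homτ a.1.1 (v a.1.1))⁻¹ := by
    rw [hsplit]
    group
  rw [hmain, hcomm.eq, mul_inv_cancel_right, homτ_apply, homτ_apply]
  cases hbi : bv (v a.1.1) <;> cases hbj : bv (v a.1.2) <;>
    simp only [Bool.false_eq_true, eq_self_iff_true, if_false, if_true, one_mul, mul_one,
      inv_one]
  · show X a e = X a (Bool.xor e (Bool.xor false false))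
    cases e <;> rfl
  · rw [conj2]
    show X a (!e) = X a (Bool.xor e (Bool.xor false true))
    cases e <;> rfl
  · rw [conj1]
    show X a (!e) = X a (Bool.xor e (Bool.xor true false))
    cases e <;> rfl
  · rw [conj2, conj1]
    show X a (!!e) = X a (Bool.xor e (Bool.xor true true))
    cases e <;> rfl

lemma compat : ∀ v : Vn n,
    Φ.comp (φAut v).toMonoidHom = (MulAut.conj (f₂ v)).toMonoidHom.comp Φ := by
  intro v
  apply PresentedGroup.ext
  intro g
  simp only [MonoidHom.comp_apply, MulEquiv.coe_toMonoidHom, MulAut.conj_apply]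
  rw [φAut_apply, A_of, Φ_of, Φ_of]
  exact (conj_f₂ v g.1 g.2).symm

/-- the homomorphism `Ψ : K → G_{n,d}²` -/
def Ψ : K n →* G2d n := SemidirectProduct.lift Φ f₂ compat

lemma Ψ_inl (x : G2p n) : Ψ (SemidirectProduct.inl x) = Φ x :=
  SemidirectProduct.lift_inl _ _ _ _

lemma Ψ_inr (v : Vn n) : Ψ (SemidirectProduct.inr v) = f₂ v :=
  SemidirectProduct.lift_inr _ _ _ _

lemma ΨΘ : (Ψ (n := n)).comp Θ = MonoidHom.id _ := by
  apply PresentedGroup.ext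
  intro g
  cases g with
  | inl a =>
    show Ψ (Θ (gA a)) = gA a
    rw [Θ_inl]
    rw [Ψ_inl, Φ_of]
    rfl
  | inr i =>
    show Ψ (Θ (τ i)) = τ i
    rw [Θ_inr]
    rw [Ψ_inr]
    exact f₂_ee i

lemma ΘΦ : (Θ (n := n)).comp Φ = SemidirectProduct.inl := by
  apply PresentedGroup.ext
  intro g
  obtain ⟨a, e⟩ := g
  show Θ (Φ (PresentedGroup.of (a, e))) = SemidirectProduct.inl (PresentedGroup.of (a, e))
  rw [Φ_of]
  cases e
  · exact Θ_inl a
  · show Θ (τ a.1.1 * gA a * τ a.1.1) = _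
    rw [map_mul, map_mul, Θ_inl, Θ_inr, inr_inl_comm]
    calc SemidirectProduct.inl (φAut (ee a.1.1) (PresentedGroup.of (a, false))) *
          SemidirectProduct.inr (ee a.1.1) * SemidirectProduct.inr (ee a.1.1)
        = SemidirectProduct.inl (φAut (ee a.1.1) (PresentedGroup.of (a, false))) *
            (SemidirectProduct.inr (ee a.1.1 * ee a.1.1)) := by rw [map_mul]; group
      _ = SemidirectProduct.inl (φAut (ee a.1.1) (PresentedGroup.of (a, false))) := by
            rw [ee_sq, map_one, mul_one]
      _ = SemidirectProduct.inl (PresentedGroup.of (a, true)) := by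
            rw [φAut_apply, A_ee_fst]
            rfl

lemma Ni_eq (i : Fin n) :
    Ni n i = (Pi.evalMonoidHom (fun _ : Fin n => Multiplicative (ZMod 2)) i).comp
      (SemidirectProduct.rightHom.comp Θ) := by
  apply PresentedGroup.ext
  intro g
  cases g with
  | inl a =>
    show Ni n i (gA a) = _
    rw [Ni, PresentedGroup.toGroup.of]
    simp only [MonoidHom.comp_apply]
    rw [Θ_inl, SemidirectProduct.rightHom_inl]
    rfl
  | inr k =>
    show Ni n i (τ k) = _
    rw [Ni, PresentedGroup.toGroup.of]
    simp only [MonoidHom.comp_apply]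
    rw [Θ_inr, SemidirectProduct.rightHom_inr]
    show NiMap n i (Sum.inr k) = ee k i
    rw [NiMap, Sum.elim_inr]
    by_cases h : k = i
    · subst h; rw [if_pos rfl, ee_self]
    · rw [if_neg h, ee_other (Ne.symm h)]

lemma memH_iff (g : G2d n) :
    g ∈ Hsub n ↔ SemidirectProduct.rightHom (Θ g) = 1 := by
  rw [Hsub, Subgroup.mem_iInf]
  constructor
  · intro h
    funext i
    have hi := h i
    rw [MonoidHom.mem_ker, Ni_eq] at hi
    exact hi
  · intro h i
    rw [MonoidHom.mem_ker, Ni_eq]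
    show (SemidirectProduct.rightHom (Θ g)) i = 1
    rw [h]
    rfl

lemma Φ_mem (x : G2p n) : Φ x ∈ Hsub n := by
  rw [memH_iff]
  have h : Θ (Φ x) = SemidirectProduct.inl x := DFunLike.congr_fun ΘΦ x
  rw [h, SemidirectProduct.rightHom_inl]

/-- the isomorphism `G_{n,p}² ≃* H_{n,d}²` -/
def eIso : G2p n ≃* Hsub n where
  toFun x := ⟨Φ x, Φ_mem x⟩
  invFun h := (Θ h.1).left
  left_inv x := by
    have h : Θ (Φ x) = SemidirectProduct.inl x := DFunLike.congr_fun ΘΦ x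
    show (Θ (Φ x)).left = x
    rw [h, SemidirectProduct.left_inl]
  right_inv := fun ⟨g, hg⟩ => by
    apply Subtype.ext
    show Φ ((Θ g).left) = g
    have h1 : SemidirectProduct.rightHom (Θ g) = 1 := (memH_iff g).mp hg
    have h2 : Θ g = SemidirectProduct.inl ((Θ g).left) := by
      conv_lhs => rw [← SemidirectProduct.inl_left_mul_inr_right (Θ g)]
      have h3 : (Θ g).right = 1 := h1
      rw [h3, map_one, mul_one]
    have h4 : Ψ (Θ g) = g := DFunLike.congr_fun ΨΘ g
    rw [h2, Ψ_inl] at h4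
    exact h4
  map_mul' x y := Subtype.ext (map_mul Φ x y)

/-- a Boolean coloring as an element of `Vn n` -/
def vc (c : Fin n → Bool) : Vn n := fun i => if c i then Multiplicative.ofAdd 1 else 1

lemma bv_vc (c : Fin n → Bool) (i : Fin n) : bv (vc c i) = c i := by
  cases h : c i
  · show bv (if c i then _ else _) = false
    rw [h, if_neg Bool.false_ne_true, bv_one]
  · show bv (if c i then _ else _) = true
    rw [h, if_pos rfl, bv_gen]

lemma vc_false : vc (fun _ : Fin n => false) = 1 := funext fun _ => rfl

lemma vc_update (c : Fin n → Bool) (i : Fin n) :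
    vc c * ee i = vc (Function.update c i (!c i)) := by
  funext k
  rw [Pi.mul_apply]
  by_cases h : k = i
  · subst h
    show vc c k * ee k k = vc (Function.update c k (!c k)) k
    rw [ee_self]
    show (if c k then _ else _) * _ = (if Function.update c k (!c k) k then _ else _)
    rw [Function.update_self]
    cases hc : c k
    · rw [if_neg Bool.false_ne_true, one_mul, Bool.not_false, if_pos rfl]
    · rw [if_pos rfl, Bool.not_true, if_neg Bool.false_ne_true, mul2_self]
  · rw [ee_other h, mul_one]
    show (if c k then _ else _) = (if Function.update c i (!c i) k then _ else _)
    rw [Function.update_of_ne h]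

lemma chi_eq (w : List (GenD n)) : ∀ c : Fin n → Bool,
    chiWord w c = A (vc c) ((Θ (wordProd n w)).left) := by
  induction w with
  | nil =>
    intro c
    show (1 : G2p n) = _
    have h : wordProd n [] = 1 := rfl
    rw [h, map_one, SemidirectProduct.one_left, map_one]
  | cons hd t ih =>
    cases hd with
    | inl a =>
      intro c
      show PresentedGroup.of (a, Bool.xor (c a.1.1) (c a.1.2)) * chiWord t c = _
      have hw : wordProd n (Sum.inl a :: t) = gA a * wordProd n t := by
        rw [wordProd, wordProd, List.map_cons, List.prod_cons]
      rw [hw, map_mul, Θ_inl, SemidirectProduct.mul_left, SemidirectProduct.left_inl,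
        SemidirectProduct.right_inl, map_one, MulAut.one_apply, map_mul, A_of]
      show _ = PresentedGroup.of (a, _) * _
      rw [ih c]
      congr 2
      rw [bv_vc, bv_vc]
      cases c a.1.1 <;> cases c a.1.2 <;> rfl
    | inr i =>
      intro c
      show chiWord t (Function.update c i (!c i)) = _
      have hw : wordProd n (Sum.inr i :: t) = τ i * wordProd n t := by
        rw [wordProd, wordProd, List.map_cons, List.prod_cons]
      rw [hw, map_mul, Θ_inr, SemidirectProduct.mul_left, SemidirectProduct.left_inr,
        SemidirectProduct.right_inr, one_mul, φAut_apply, A_A, vc_update]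
      exact ih _

end PhiIso

theorem phi_iso_H (n : ℕ) :
    ∃ e : G2p n ≃* Hsub n,
      (∀ a : GenG n,
        ((e (PresentedGroup.of (a, false)) : G2d n) = PresentedGroup.of (Sum.inl a)) ∧
        ((e (PresentedGroup.of (a, true)) : G2d n) =
          PresentedGroup.of (Sum.inr a.1.1) * PresentedGroup.of (Sum.inl a) *
            PresentedGroup.of (Sum.inr a.1.1))) ∧
      ∀ (w : List (GenD n)) (h : wordProd n w ∈ Hsub n),
        e.symm ⟨wordProd n w, h⟩ = chiWord w (fun _ => false) := by
  refine ⟨PhiIso.eIso, fun a => ⟨?_, ?_⟩, fun w h => ?_⟩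
  · show PhiIso.Φ (PresentedGroup.of (a, false)) = _
    rw [PhiIso.Φ_of]
    rfl
  · show PhiIso.Φ (PresentedGroup.of (a, true)) = _
    rw [PhiIso.Φ_of]
    rfl
  · have hc := PhiIso.chi_eq w (fun _ : Fin n => false)
    rw [PhiIso.vc_false, PhiIso.A_one] at hc
    rw [hc]
    rfl
end

section
/- If two elements of G_{n,p}^2 have equal images in G_{n,d}^2 under φ, then they are equal in G_{n,p}^2. -/
namespace PhiInj

lemma mk_rel_eq_one {α : Type*} {rels : Set (FreeGroup α)} {r : FreeGroup α} (h : r ∈ rels) :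
    PresentedGroup.mk rels r = 1 :=
  (QuotientGroup.eq_one_iff r).2 (Subgroup.subset_normalClosure h)

variable {n : ℕ}

lemma sqP (a : GenP n) : (PresentedGroup.of a : G2p n) * PresentedGroup.of a = 1 := by
  have h := mk_rel_eq_one (rels := relsP n) (Or.inl ⟨a, rfl⟩)
  rw [map_mul] at h
  exact h

lemma commP (a b : GenG n) (e₁ e₂ : Bool)
    (h4 : ({a.1.1, a.1.2, b.1.1, b.1.2} : Finset (Fin n)).card = 4) :
    (PresentedGroup.of (a,e₁) : G2p n) * .of (b,e₂) * (.of (b,e₂) * .of (a,e₁))⁻¹ = 1 := by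
  have h := mk_rel_eq_one (rels := relsP n) (Or.inr (Or.inl ⟨a, b, e₁, e₂, h4, rfl⟩))
  rw [map_mul, map_mul, map_inv, map_mul] at h
  exact h

lemma tripleP (i j k : Fin n) (hij : i < j) (hik : i < k) (hjk : j < k) (e₁ e₂ e₃ : Bool)
    (hx : Bool.xor e₁ (Bool.xor e₂ e₃) = false) :
    (PresentedGroup.of (⟨(i,j),hij⟩,e₁) : G2p n) * .of (⟨(i,k),hik⟩,e₂) * .of (⟨(j,k),hjk⟩,e₃) *
      (.of (⟨(j,k),hjk⟩,e₃) * .of (⟨(i,k),hik⟩,e₂) * .of (⟨(i,j),hij⟩,e₁))⁻¹ = 1 := by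
  have h := mk_rel_eq_one (rels := relsP n)
    (Or.inr (Or.inr ⟨i, j, k, hij, hik, hjk, e₁, e₂, e₃, hx, rfl⟩))
  rw [map_mul, map_mul, map_mul, map_inv, map_mul, map_mul] at h
  exact h

/-- the generator-flipping map for `v : Fin n → ZMod 2` -/
def flipF (v : Fin n → ZMod 2) : GenP n → G2p n :=
  fun x => PresentedGroup.of (x.1, Bool.xor x.2 (decide (v x.1.1.1 + v x.1.1.2 = 1)))

lemma flip_rels (v : Fin n → ZMod 2) : ∀ r ∈ relsP n, FreeGroup.lift (flipF v) r = 1 := by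
  rintro r (⟨a, rfl⟩ | ⟨a, b, e₁, e₂, h4, rfl⟩ | ⟨i, j, k, hij, hik, hjk, e₁, e₂, e₃, hx, rfl⟩)
  · simp only [map_mul, FreeGroup.lift_apply_of, flipF]
    exact sqP _
  · simp only [map_mul, map_inv, FreeGroup.lift_apply_of, flipF]
    exact commP a b _ _ h4
  · simp only [map_mul, map_inv, FreeGroup.lift_apply_of, flipF]
    refine tripleP i j k hij hik hjk _ _ _ ?_
    revert hx
    generalize v i = x
    generalize v j = y
    generalize v k = z
    revert e₁ e₂ e₃
    revert x y z
    decide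

def flipHom (v : Fin n → ZMod 2) : G2p n →* G2p n := PresentedGroup.toGroup (flip_rels v)

@[simp] lemma flipHom_of (v : Fin n → ZMod 2) (x : GenP n) :
    flipHom v (PresentedGroup.of x)
      = PresentedGroup.of (x.1, Bool.xor x.2 (decide (v x.1.1.1 + v x.1.1.2 = 1))) :=
  PresentedGroup.toGroup.of _

lemma flip_flip (v w : Fin n → ZMod 2) :
    (flipHom v).comp (flipHom w) = flipHom (v + w) := by
  ext x
  simp only [MonoidHom.comp_apply, flipHom_of, Pi.add_apply]
  have h : ∀ (e : Bool) (a b c d : ZMod 2),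
      Bool.xor (Bool.xor e (decide (c + d = 1))) (decide (a + b = 1))
        = Bool.xor e (decide (a + c + (b + d) = 1)) := by decide
  rw [h]

lemma vv (v : Fin n → ZMod 2) : v + v = 0 := by
  funext t
  simp only [Pi.add_apply, Pi.zero_apply]
  generalize v t = a; revert a; decide

lemma flipHom_zero : (flipHom (0 : Fin n → ZMod 2)) = MonoidHom.id (G2p n) := by
  ext x
  simp only [flipHom_of, Pi.zero_apply, MonoidHom.id_apply]
  have h3 : ((0 : ZMod 2) + 0 = 1) = False := eq_false (by decide)
  simp [h3]

lemma flip_flip_self (v : Fin n → ZMod 2) (y : G2p n) : flipHom v (flipHom v y) = y := by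
  have h : (flipHom v).comp (flipHom v) = MonoidHom.id (G2p n) := by
    rw [flip_flip, vv, flipHom_zero]
  exact DFunLike.congr_fun h y

def flipAut (v : Fin n → ZMod 2) : MulAut (G2p n) where
  toFun := flipHom v
  invFun := flipHom v
  left_inv := flip_flip_self v
  right_inv := flip_flip_self v
  map_mul' := map_mul _

def tauAct (n : ℕ) : Multiplicative (Fin n → ZMod 2) →* MulAut (G2p n) :=
  MonoidHom.mk' (fun v => flipAut v.toAdd) (fun u v => by
    ext y
    show flipHom (u.toAdd + v.toAdd) y = flipHom u.toAdd (flipHom v.toAdd y)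
    exact (DFunLike.congr_fun (flip_flip u.toAdd v.toAdd) y).symm)

abbrev SDP (n : ℕ) := G2p n ⋊[tauAct n] Multiplicative (Fin n → ZMod 2)

lemma tauAct_apply (u : Fin n → ZMod 2) (g : G2p n) :
    (tauAct n (Multiplicative.ofAdd u)) g = flipHom u g := rfl

lemma inl_mul (g h : G2p n) :
    (SemidirectProduct.inl g : SDP n) * .inl h = .inl (g * h) := (map_mul _ _ _).symm

lemma inl_inv (g : G2p n) :
    (SemidirectProduct.inl g : SDP n)⁻¹ = .inl g⁻¹ := (map_inv _ _).symm

lemma inr_mul (u w : Fin n → ZMod 2) :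
    (SemidirectProduct.inr (Multiplicative.ofAdd u) : SDP n) * .inr (.ofAdd w)
      = .inr (.ofAdd (u + w)) := by
  rw [← map_mul]; rfl

lemma inr_inv (u : Fin n → ZMod 2) :
    (SemidirectProduct.inr (Multiplicative.ofAdd u) : SDP n)⁻¹ = .inr (.ofAdd u) := by
  rw [← map_inv]
  congr 1
  show Multiplicative.ofAdd (-u) = Multiplicative.ofAdd u
  rw [neg_eq_of_add_eq_zero_left (vv u)]

lemma conj1 (u : Fin n → ZMod 2) (g : G2p n) :
    (SemidirectProduct.inr (Multiplicative.ofAdd u) : SDP n) * .inl g * .inr (.ofAdd u)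
      = .inl (flipHom u g) := by
  ext : 1
  · simp [tauAct_apply]
  · simp only [SemidirectProduct.mul_right, SemidirectProduct.right_inr,
      SemidirectProduct.right_inl, mul_one, one_mul]
    show Multiplicative.ofAdd u * Multiplicative.ofAdd u = 1
    rw [show Multiplicative.ofAdd u * Multiplicative.ofAdd u
        = Multiplicative.ofAdd (u + u) from rfl, vv, ofAdd_zero]

lemma conj2 (u w : Fin n → ZMod 2) (g : G2p n) :
    (SemidirectProduct.inr (Multiplicative.ofAdd u) : SDP n) * .inr (.ofAdd w) * .inl g
        * .inr (.ofAdd w) * .inr (.ofAdd u)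
      = .inl (flipHom (u + w) g) := by
  calc (SemidirectProduct.inr (Multiplicative.ofAdd u) : SDP n) * .inr (.ofAdd w) * .inl g
        * .inr (.ofAdd w) * .inr (.ofAdd u)
      = ((SemidirectProduct.inr (Multiplicative.ofAdd u) : SDP n) * .inr (.ofAdd w)) * .inl g
        * (.inr (.ofAdd w) * .inr (.ofAdd u)) := by group
    _ = (SemidirectProduct.inr (Multiplicative.ofAdd (u + w)) : SDP n) * .inl g
        * .inr (.ofAdd (u + w)) := by rw [inr_mul, inr_mul, add_comm w u]
    _ = .inl (flipHom (u + w) g) := conj1 _ _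

/-- images of the generators of `G2d` in the semidirect product -/
def dGen (n : ℕ) : GenD n → SDP n
  | .inl a => SemidirectProduct.inl (PresentedGroup.of (a, false))
  | .inr k => SemidirectProduct.inr (Multiplicative.ofAdd (Pi.single k 1))

lemma dGen_rels : ∀ r ∈ relsD n, FreeGroup.lift (dGen n) r = 1 := by
  rintro r (⟨a, rfl⟩ | ⟨a, b, h4, rfl⟩ | ⟨i, j, k, hij, hik, hjk, rfl⟩ | ⟨i, rfl⟩ |
    ⟨i, j, hne, rfl⟩ | ⟨i, j, h, rfl⟩ | ⟨a, k, hk1, hk2, rfl⟩)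
  · simp only [map_mul, FreeGroup.lift_apply_of, dGen]
    simp only [inl_mul]
    rw [sqP, map_one]
  · simp only [map_mul, map_inv, FreeGroup.lift_apply_of, dGen]
    simp only [inl_mul, inl_inv]
    rw [commP a b false false h4, map_one]
  · simp only [map_mul, map_inv, FreeGroup.lift_apply_of, dGen]
    simp only [inl_mul, inl_inv]
    rw [tripleP i j k hij hik hjk false false false rfl, map_one]
  · simp only [map_mul, FreeGroup.lift_apply_of, dGen, inr_mul]
    rw [vv, ofAdd_zero, map_one]
  · simp only [map_mul, map_inv, FreeGroup.lift_apply_of, dGen, inr_mul, inr_inv]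
    have hz : ∀ u w : Fin n → ZMod 2, u + w + (w + u) = 0 := fun u w => by
      rw [add_comm w u]; exact vv _
    rw [hz, ofAdd_zero, map_one]
  · simp only [map_mul, map_inv, FreeGroup.lift_apply_of, dGen]
    rw [mul_inv_eq_one, conj2, flipHom_of]
    have hij : i ≠ j := ne_of_lt h
    have h1 : (Pi.single i 1 + Pi.single j 1 : Fin n → ZMod 2) i = 1 := by
      simp [Pi.single_eq_of_ne hij]
    have h2 : (Pi.single i 1 + Pi.single j 1 : Fin n → ZMod 2) j = 1 := by
      simp [Pi.single_eq_of_ne hij.symm]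
    have h3 : ((1 : ZMod 2) + 1 = 1) = False := eq_false (by decide)
    simp [h1, h2, h3]
  · simp only [map_mul, map_inv, FreeGroup.lift_apply_of, dGen]
    rw [mul_inv_eq_one]
    ext
    · simp only [SemidirectProduct.mul_left, SemidirectProduct.left_inl,
        SemidirectProduct.left_inr, SemidirectProduct.right_inl, SemidirectProduct.right_inr,
        map_one, mul_one, one_mul, tauAct_apply, flipHom_of]
      have h1 : (Pi.single k 1 : Fin n → ZMod 2) a.1.1 = 0 := Pi.single_eq_of_ne hk1.symm _
      have h2 : (Pi.single k 1 : Fin n → ZMod 2) a.1.2 = 0 := Pi.single_eq_of_ne hk2.symm _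
      have h3 : ((0 : ZMod 2) + 0 = 1) = False := eq_false (by decide)
      simp [h1, h2, h3]
    · simp

end PhiInj

open PhiInj in
theorem phi_injective (n : ℕ) (φ : G2p n →* G2d n)
    (hφ : ∀ a : GenG n,
      φ (PresentedGroup.of (a, false)) = PresentedGroup.of (Sum.inl a) ∧
      φ (PresentedGroup.of (a, true)) =
        PresentedGroup.of (Sum.inr a.1.1) * PresentedGroup.of (Sum.inl a) *
          PresentedGroup.of (Sum.inr a.1.1)) :
    ∀ x y : G2p n, φ x = φ y → x = y := by
  classical
  set ψ : G2d n →* SDP n := PresentedGroup.toGroup (dGen_rels (n := n)) with hψ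
  have hψof : ∀ x : GenD n, ψ (PresentedGroup.of x) = dGen n x := fun x =>
    PresentedGroup.toGroup.of _
  have key : ψ.comp φ = SemidirectProduct.inl := by
    apply PresentedGroup.ext
    rintro ⟨a, e⟩
    cases e with
    | false =>
        rw [MonoidHom.comp_apply, (hφ a).1, hψof]
        rfl
    | true =>
        rw [MonoidHom.comp_apply, (hφ a).2, map_mul, map_mul]
        simp only [hψof]
        show (SemidirectProduct.inr (Multiplicative.ofAdd (Pi.single a.1.1 1)) : SDP n)
            * .inl (PresentedGroup.of (a, false)) * .inr (.ofAdd (Pi.single a.1.1 1))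
          = .inl (PresentedGroup.of (a, true))
        rw [conj1, flipHom_of]
        have hne : a.1.2 ≠ a.1.1 := (ne_of_lt a.2).symm
        rw [Pi.single_eq_same, Pi.single_eq_of_ne hne]
        have h3 : ((1 : ZMod 2) + 0 = 1) = True := eq_true (by decide)
        simp [h3]
  intro x y h
  have h2 := congrArg ψ h
  rw [← MonoidHom.comp_apply, ← MonoidHom.comp_apply, key] at h2
  exact SemidirectProduct.inl_injective h2
end

section
/- The map ψ : G_{n+1}^2 → G_{n,d}^2 defined on generators by ψ(a_{ij}) = a_{ij} if n+1 ∉ {i,j}, ψ(a_{i(n+1)}) = τ_i, is a well-defined group homomorphism. -/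
lemma card4_iff {α} [DecidableEq α] {a b c d : α} :
    ({a,b,c,d} : Finset α).card = 4 ↔ a≠b ∧ a≠c ∧ a≠d ∧ b≠c ∧ b≠d ∧ c≠d := by
  simp [Finset.card_insert_of_notMem, Finset.card_insert_eq_ite, Finset.mem_insert]
  aesop

lemma relD_one {n : ℕ} {r : FreeGroup (GenD n)} (h : r ∈ relsD n) :
    (QuotientGroup.mk r : G2d n) = 1 :=
  (QuotientGroup.eq_one_iff r).2 (Subgroup.subset_normalClosure h)

lemma of_eq_mk {α : Type*} {rels : Set (FreeGroup α)} (x : α) :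
    (PresentedGroup.of x : PresentedGroup rels) = QuotientGroup.mk (FreeGroup.of x) := rfl

namespace G2dLemmas
variable {n : ℕ}

local notation "A" a => (PresentedGroup.of (Sum.inl a) : G2d n)
local notation "T" i => (PresentedGroup.of (Sum.inr i) : G2d n)

lemma L1 (a : GenG n) : (A a) * (A a) = 1 := by
  have := relD_one (n := n) (r := .of (.inl a) * .of (.inl a)) (Or.inl ⟨a, rfl⟩)
  exact this

lemma L2 (a b : GenG n) (h : ({a.1.1, a.1.2, b.1.1, b.1.2} : Finset (Fin n)).card = 4) :
    (A a) * (A b) = (A b) * (A a) := by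
  have := relD_one (n := n)
    (r := .of (.inl a) * .of (.inl b) * (.of (.inl b) * .of (.inl a))⁻¹)
    (Or.inr (Or.inl ⟨a, b, h, rfl⟩))
  rw [of_eq_mk, of_eq_mk, ← mul_inv_eq_one]
  exact this

lemma L3 (i j k : Fin n) (hij : i < j) (hik : i < k) (hjk : j < k) :
    (A (⟨(i,j),hij⟩ : GenG n)) * (A (⟨(i,k),hik⟩ : GenG n)) * (A (⟨(j,k),hjk⟩ : GenG n)) =
    (A (⟨(j,k),hjk⟩ : GenG n)) * (A (⟨(i,k),hik⟩ : GenG n)) * (A (⟨(i,j),hij⟩ : GenG n)) := by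
  have := relD_one (n := n)
    (r := .of (.inl ⟨(i,j),hij⟩) * .of (.inl ⟨(i,k),hik⟩) * .of (.inl ⟨(j,k),hjk⟩) *
          (.of (.inl ⟨(j,k),hjk⟩) * .of (.inl ⟨(i,k),hik⟩) * .of (.inl ⟨(i,j),hij⟩))⁻¹)
    (Or.inr (Or.inr (Or.inl ⟨i, j, k, hij, hik, hjk, rfl⟩)))
  rw [← mul_inv_eq_one]
  simp only [of_eq_mk]
  exact this

lemma L4 (i : Fin n) : (T i) * (T i) = 1 := by
  have := relD_one (n := n) (r := .of (.inr i) * .of (.inr i))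
    (Or.inr (Or.inr (Or.inr (Or.inl ⟨i, rfl⟩))))
  exact this

lemma L5 (i j : Fin n) (h : i ≠ j) : (T i) * (T j) = (T j) * (T i) := by
  have := relD_one (n := n)
    (r := .of (.inr i) * .of (.inr j) * (.of (.inr j) * .of (.inr i))⁻¹)
    (Or.inr (Or.inr (Or.inr (Or.inr (Or.inl ⟨i, j, h, rfl⟩)))))
  rw [← mul_inv_eq_one]
  simp only [of_eq_mk]
  exact this

lemma L6 (i j : Fin n) (h : i < j) :
    (T i) * (T j) * (A (⟨(i,j),h⟩ : GenG n)) * (T j) * (T i) = A (⟨(i,j),h⟩ : GenG n) := by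
  have := relD_one (n := n)
    (r := .of (.inr i) * .of (.inr j) * .of (.inl ⟨(i,j),h⟩) * .of (.inr j) * .of (.inr i) *
          (.of (.inl ⟨(i,j),h⟩))⁻¹)
    (Or.inr (Or.inr (Or.inr (Or.inr (Or.inr (Or.inl ⟨i, j, h, rfl⟩))))))
  rw [← mul_inv_eq_one]
  simp only [of_eq_mk]
  exact this

lemma L7 (a : GenG n) (k : Fin n) (h1 : k ≠ a.1.1) (h2 : k ≠ a.1.2) :
    (A a) * (T k) = (T k) * (A a) := by
  have := relD_one (n := n)
    (r := .of (.inl a) * .of (.inr k) * (.of (.inr k) * .of (.inl a))⁻¹)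
    (Or.inr (Or.inr (Or.inr (Or.inr (Or.inr (Or.inr ⟨a, k, h1, h2, rfl⟩))))))
  rw [← mul_inv_eq_one]
  simp only [of_eq_mk]
  exact this

end G2dLemmas
open G2dLemmas in
section
variable {n : ℕ}

lemma ne_last_of_lt' {i j : Fin (n+1)} (h : i < j) : i ≠ Fin.last n :=
  Fin.ne_last_of_lt (lt_of_lt_of_le h (Fin.le_last _))

def fmap (n : ℕ) : GenG (n+1) → G2d n := fun a =>
  if hj : a.1.2 = Fin.last n then
    PresentedGroup.of (Sum.inr (a.1.1.castPred (ne_last_of_lt' a.2)))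
  else
    PresentedGroup.of (Sum.inl ⟨(a.1.1.castPred (ne_last_of_lt' a.2), a.1.2.castPred hj),
      (Fin.castPred_lt_castPred_iff (hi := ne_last_of_lt' a.2) (hj := hj)).mpr a.2⟩)

lemma fmap_last (i : Fin (n+1)) (h : i < Fin.last n) :
    fmap n ⟨(i, Fin.last n), h⟩ = PresentedGroup.of (Sum.inr (i.castPred (Fin.ne_last_of_lt h))) := by
  simp [fmap]

lemma fmap_lt {i j : Fin (n+1)} (hij : i < j) (hj : j ≠ Fin.last n) :
    fmap n ⟨(i, j), hij⟩ = PresentedGroup.of (Sum.inl ⟨(i.castPred (ne_last_of_lt' hij),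
      j.castPred hj), (Fin.castPred_lt_castPred_iff (hi := ne_last_of_lt' hij) (hj := hj)).mpr hij⟩) := by
  simp [fmap, hj]
end
lemma aux_conj {G : Type*} [Group G] (a t s : G) (ht : t*t = 1) (hs : s*s = 1)
    (hc : t*s = s*t) (h : t*s*a*s*t = a) : a*t*s = s*t*a := by
  have ht2 : ∀ x : G, t*(t*x) = x := fun x => by rw [← mul_assoc, ht, one_mul]
  calc a*t*s = (t*s*a*s*t)*t*s := by rw [h]
    _ = t*(s*a) := by simp [mul_assoc, ht2, hs]
    _ = s*t*a := by rw [← mul_assoc, hc, mul_assoc]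

open G2dLemmas in
theorem psi_well_defined (n : ℕ) :
    ∃ ψ : G2 (n+1) →* G2d n,
      (∀ (i j : Fin n) (hij : i < j),
        ψ (PresentedGroup.of ⟨(i.castSucc, j.castSucc), Fin.castSucc_lt_castSucc_iff.mpr hij⟩) =
          PresentedGroup.of (Sum.inl ⟨(i,j),hij⟩)) ∧
      (∀ i : Fin n,
        ψ (PresentedGroup.of ⟨(i.castSucc, Fin.last n), Fin.castSucc_lt_last i⟩) =
          PresentedGroup.of (Sum.inr i)) := by
  have hrel : ∀ r ∈ relsG (n+1), FreeGroup.lift (fmap n) r = 1 := by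
    intro r hr
    rcases hr with ⟨a, rfl⟩ | ⟨a, b, hc, rfl⟩ | ⟨i, j, k, hij, hik, hjk, rfl⟩
    · obtain ⟨⟨i, j⟩, hlt⟩ := a
      simp only [map_mul, FreeGroup.lift_apply_of]
      by_cases hj : j = Fin.last n
      · subst hj; rw [fmap_last _ hlt]; exact L4 _
      · rw [fmap_lt hlt hj]; exact L1 _
    · obtain ⟨⟨a1, a2⟩, ha⟩ := a
      obtain ⟨⟨b1, b2⟩, hb⟩ := b
      obtain ⟨h12, h1b1, h1b2, h2b1, h2b2, hb12⟩ := card4_iff.mp hc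
      simp only [map_mul, map_inv, FreeGroup.lift_apply_of]
      rw [mul_inv_eq_one]
      have ha1 : a1 ≠ Fin.last n := Fin.ne_last_of_lt ha
      have hb1 : b1 ≠ Fin.last n := Fin.ne_last_of_lt hb
      by_cases ha2 : a2 = Fin.last n <;> by_cases hb2 : b2 = Fin.last n
      · exact absurd (ha2.trans hb2.symm) h2b2
      · subst ha2
        rw [fmap_last _ ha, fmap_lt hb hb2]
        refine (L7 _ _ ?_ ?_).symm
        · exact fun e => h1b1 ((Fin.castPred_inj (hi := ha1) (hj := hb1)).mp e)
        · exact fun e => h1b2 ((Fin.castPred_inj (hi := ha1) (hj := hb2)).mp e)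
      · subst hb2
        rw [fmap_last _ hb, fmap_lt ha ha2]
        refine L7 _ _ ?_ ?_
        · exact fun e => h1b1 ((Fin.castPred_inj (hi := hb1) (hj := ha1)).mp e).symm
        · exact fun e => h2b1 ((Fin.castPred_inj (hi := hb1) (hj := ha2)).mp e).symm
      · rw [fmap_lt ha ha2, fmap_lt hb hb2]
        exact L2 _ _ (card4_iff.mpr
          ⟨fun e => h12 ((Fin.castPred_inj (hi := ha1) (hj := ha2)).mp e),
           fun e => h1b1 ((Fin.castPred_inj (hi := ha1) (hj := hb1)).mp e),
           fun e => h1b2 ((Fin.castPred_inj (hi := ha1) (hj := hb2)).mp e),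
           fun e => h2b1 ((Fin.castPred_inj (hi := ha2) (hj := hb1)).mp e),
           fun e => h2b2 ((Fin.castPred_inj (hi := ha2) (hj := hb2)).mp e),
           fun e => hb12 ((Fin.castPred_inj (hi := hb1) (hj := hb2)).mp e)⟩)
    · simp only [map_mul, map_inv, FreeGroup.lift_apply_of]
      rw [mul_inv_eq_one]
      have hjl : j ≠ Fin.last n := by
        by_cases hk : k = Fin.last n
        · exact Fin.ne_last_of_lt (hk ▸ hjk)
        · exact Fin.ne_last_of_lt (lt_of_lt_of_le hjk (Fin.le_last _))
      have hil : i ≠ Fin.last n := Fin.ne_last_of_lt hij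
      by_cases hk : k = Fin.last n
      · subst hk
        rw [fmap_lt hij hjl, fmap_last _ hik, fmap_last _ hjk]
        exact aux_conj _ _ _ (L4 _) (L4 _)
          (L5 _ _ (fun e => (Fin.ne_of_lt hij) ((Fin.castPred_inj (hi := hil) (hj := hjl)).mp e)))
          (L6 _ _ ((Fin.castPred_lt_castPred_iff (hi := hil) (hj := hjl)).mpr hij))
      · have hkl : k ≠ Fin.last n := hk
        rw [fmap_lt hij hjl, fmap_lt hik hkl, fmap_lt hjk hkl]
        exact L3 _ _ _ _ _ _
  refine ⟨PresentedGroup.toGroup hrel, fun i j hij => ?_, fun i => ?_⟩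
  · rw [PresentedGroup.toGroup.of, fmap_lt _ (Fin.ne_last_of_lt (Fin.castSucc_lt_last j))]
    simp [Fin.castPred_castSucc]
  · rw [PresentedGroup.toGroup.of, fmap_last _ (Fin.castSucc_lt_last i)]
    simp
end
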